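/- arXiv:math/0506564 — 4 statements merged into one kernel-verified Lean document; each statement's English description precedes it below -/
import Mathlib

section
/- Let P = [Q, v] be a pyramid with apex v over an (n−1)-polytope base Q, where v is not in the affine hull of Q. If two triangulations αQ and βQ of Q are equivalent by elementary moves, then the induced triangulations [αQ, v] and [βQ, v] of P (obtained by coning each simplex of the triangulation of Q to v) are equivalent by elementary moves. -/
open Set MeasureTheory
open scoped Classical
noncomputable section

/-- Ambient Euclidean space `ℝ^N`. -/
abbrev Euc (N : ℕ) := EuclideanSpace ℝ (Fin N)

/-- `s` is an `n`-simplex: the convex hull of `n+1` affinely independent points. -/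
def IsSimplex {N : ℕ} (n : ℕ) (s : Set (Euc N)) : Prop :=
  ∃ v : Fin (n + 1) → Euc N, AffineIndependent ℝ v ∧ s = convexHull ℝ (Set.range v)

/-- The (affine) dimension of a set: the rank of its vector span. -/
def sdim {N : ℕ} (s : Set (Euc N)) : ℕ := Module.finrank ℝ (vectorSpan ℝ s)

/-- A polytope: the compact convex hull of finitely many points (nonempty). -/
def IsPolytope {N : ℕ} (s : Set (Euc N)) : Prop :=
  ∃ t : Finset (Euc N), t.Nonempty ∧ s = convexHull ℝ (t : Set (Euc N))

/-- An `n`-polyhedron: a finite union of `n`-dimensional polytopes. -/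
def IsPolyhedron {N : ℕ} (n : ℕ) (P : Set (Euc N)) : Prop :=
  ∃ F : Finset (Set (Euc N)), F.Nonempty ∧ (∀ Q ∈ F, IsPolytope Q ∧ sdim Q = n) ∧
    (⋃ Q ∈ F, Q) = P

/-- A triangulation of the `n`-dimensional set `P`: a finite set of `n`-simplices with
union `P`, any two distinct ones intersecting in a set of dimension less than `n`. -/
def IsTriangulation {N : ℕ} (n : ℕ) (P : Set (Euc N)) (F : Finset (Set (Euc N))) : Prop :=
  (∀ T ∈ F, IsSimplex n T) ∧ (⋃ T ∈ F, T) = P ∧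
    ∀ S ∈ F, ∀ T ∈ F, S ≠ T → sdim (S ∩ T) < n

/-- A starring of `P` at `a`: a triangulation all of whose simplices have a vertex at `a`. -/
def IsStarring {N : ℕ} (n : ℕ) (P : Set (Euc N)) (a : Euc N) (F : Finset (Set (Euc N))) : Prop :=
  IsTriangulation n P F ∧
    ∀ T ∈ F, ∃ v : Fin (n + 1) → Euc N, AffineIndependent ℝ v ∧
      T = convexHull ℝ (Set.range v) ∧ a ∈ Set.range v

/-- `T` is dissected into the two `n`-simplices `T₁, T₂` by a hyperplane containing an
`(n-2)`-dimensional face of `T`. -/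
def IsDissection {N : ℕ} (n : ℕ) (T T₁ T₂ : Set (Euc N)) : Prop :=
  IsSimplex n T₁ ∧ IsSimplex n T₂ ∧ T₁ ∪ T₂ = T ∧ T₁ ≠ T₂ ∧
  ∃ (f : Euc N →ₗ[ℝ] ℝ) (c : ℝ), f ≠ 0 ∧
    T₁ = T ∩ {x | f x ≤ c} ∧ T₂ = T ∩ {x | c ≤ f x} ∧
    ∃ v : Fin (n + 1) → Euc N, AffineIndependent ℝ v ∧ T = convexHull ℝ (Set.range v) ∧
      ∃ s : Finset (Fin (n + 1)), s.card = n - 1 ∧ ∀ i ∈ s, f (v i) = c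

/-- An elementary move: dissect one simplex of the triangulation into two `n`-simplices by a
hyperplane containing an `(n-2)`-face, or merge two simplices whose union is again a simplex. -/
def ElemMove {N : ℕ} (n : ℕ) (F G : Finset (Set (Euc N))) : Prop :=
  (∃ T ∈ F, ∃ T₁ T₂, IsDissection n T T₁ T₂ ∧ G = insert T₁ (insert T₂ (F.erase T))) ∨
  (∃ T₁ ∈ F, ∃ T₂ ∈ F, T₁ ≠ T₂ ∧ IsSimplex n (T₁ ∪ T₂) ∧
    G = insert (T₁ ∪ T₂) ((F.erase T₁).erase T₂))

/-- Equivalence by finitely many elementary moves. -/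
def MoveEquiv {N : ℕ} (n : ℕ) (F G : Finset (Set (Euc N))) : Prop :=
  Relation.ReflTransGen (ElemMove n) F G

/-- `μ` is a valuation on the class `S` of sets. -/
def IsValuation {N : ℕ} (S : Set (Set (Euc N))) (μ : Set (Euc N) → ℝ) : Prop :=
  μ ∅ = 0 ∧ ∀ A ∈ S, ∀ B ∈ S, A ∪ B ∈ S → A ∩ B ∈ S →
    μ A + μ B = μ (A ∪ B) + μ (A ∩ B)

/-- `𝒯ⁿ`: simplices of dimension at most `n` (together with `∅`). -/
def simplexClass (N n : ℕ) : Set (Set (Euc N)) :=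
  {s | s = ∅ ∨ ∃ k ≤ n, IsSimplex k s}

/-- `𝒫ⁿ`: polytopes of dimension at most `n` (together with `∅`). -/
def polytopeClass (N n : ℕ) : Set (Set (Euc N)) :=
  {s | s = ∅ ∨ (IsPolytope s ∧ sdim s ≤ n)}

/-- `𝒬ⁿ`: polyhedra (finite unions of polytopes) of dimension at most `n` (with `∅`). -/
def polyhedronClass (N n : ℕ) : Set (Set (Euc N)) :=
  {s | s = ∅ ∨ ((∃ F : Finset (Set (Euc N)), F.Nonempty ∧ (∀ Q ∈ F, IsPolytope Q) ∧
      (⋃ Q ∈ F, Q) = s) ∧ sdim s ≤ n)}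



namespace PyramidAux

variable {N : ℕ}

/-- membership in a cone hull -/
lemma mem_coneHull {v : Euc N} {S : Set (Euc N)} (hS : Convex ℝ S) (hne : S.Nonempty)
    {x : Euc N} :
    x ∈ convexHull ℝ ({v} ∪ S) ↔ ∃ (a : ℝ) (q : Euc N), 0 ≤ a ∧ a ≤ 1 ∧ q ∈ S ∧ x = a • v + (1 - a) • q := by
  rw [Set.singleton_union, convexHull_insert hne, mem_convexJoin]
  constructor
  · rintro ⟨a, ha, b, hb, hx⟩
    rw [mem_singleton_iff] at ha
    rw [hS.convexHull_eq] at hb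
    obtain ⟨s, t, hs, ht, hst, hxe⟩ := hx
    exact ⟨s, b, hs, by linarith, hb, by rw [← hxe, ha]; rw [show t = 1 - s by linarith]⟩
  · rintro ⟨a, q, h0, h1, hq, hx⟩
    exact ⟨v, rfl, q, by rw [hS.convexHull_eq]; exact hq,
      ⟨a, 1 - a, h0, by linarith, by ring, hx.symm⟩⟩

lemma apex_mem {A : AffineSubspace ℝ (Euc N)} {v x q : Euc N} (hx : x ∈ A) (hq : q ∈ A)
    {a : ℝ} (ha : a ≠ 0) (h : x = a • v + (1 - a) • q) : v ∈ A := by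
  have h2 : x - q = a • (v - q) := by rw [h]; module
  have h3 : a⁻¹ • (x - q) + q = v := by
    rw [h2, smul_smul, inv_mul_cancel₀ ha, one_smul]; abel
  have := A.smul_vsub_vadd_mem a⁻¹ hx hq hq
  simpa [h3] using this

lemma cone_inter {A : AffineSubspace ℝ (Euc N)} {v : Euc N} (hv : v ∉ A)
    {S : Set (Euc N)} (hSA : S ⊆ A) (hS : Convex ℝ S) (hne : S.Nonempty) :
    convexHull ℝ ({v} ∪ S) ∩ A = S := by
  apply Set.Subset.antisymm
  · rintro x ⟨hx, hxA⟩
    rw [mem_coneHull hS hne] at hx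
    obtain ⟨a, q, h0, h1, hq, hx⟩ := hx
    rcases eq_or_ne a 0 with rfl | ha
    · simpa [hx] using hq
    · exact absurd (apex_mem hxA (hSA hq) ha hx) hv
  · intro q hq
    exact ⟨subset_convexHull ℝ _ (Or.inr hq), hSA hq⟩

lemma cone_injOn {A : AffineSubspace ℝ (Euc N)} {v : Euc N} (hv : v ∉ A)
    {S T : Set (Euc N)} (hSA : S ⊆ A) (hS : Convex ℝ S) (hSne : S.Nonempty)
    (hTA : T ⊆ A) (hT : Convex ℝ T) (hTne : T.Nonempty)
    (h : convexHull ℝ ({v} ∪ S) = convexHull ℝ ({v} ∪ T)) : S = T := by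
  rw [← cone_inter hv hSA hS hSne, h, cone_inter hv hTA hT hTne]

/-- cone of a simplex is a simplex -/
lemma cone_simplex {A : AffineSubspace ℝ (Euc N)} {v : Euc N} (hv : v ∉ A)
    {m : ℕ} {u : Fin (m + 1) → Euc N} (hu : AffineIndependent ℝ u)
    (hr : Set.range u ⊆ A) :
    AffineIndependent ℝ (Fin.cons v u : Fin (m + 2) → Euc N) ∧
      convexHull ℝ ({v} ∪ convexHull ℝ (Set.range u)) =
        convexHull ℝ (Set.range (Fin.cons v u : Fin (m + 2) → Euc N)) := by
  constructor
  · apply AffineIndependent.affineIndependent_of_notMem_span (i := (0 : Fin (m + 2)))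
    · let e : {y : Fin (m + 2) // y ≠ 0} ↪ Fin (m + 1) :=
        ⟨fun y => (y : Fin (m + 2)).pred y.2, by
          intro a b hab
          exact Subtype.ext (by simpa [Fin.pred_inj] using hab)⟩
      have : (fun x : {y : Fin (m + 2) // y ≠ 0} => (Fin.cons v u : Fin (m+2) → Euc N) x)
          = u ∘ e := by
        funext x
        show (Fin.cons v u : Fin (m+2) → Euc N) x = u ((x : Fin (m+2)).pred x.2)
        conv_lhs => rw [← Fin.succ_pred (x : Fin (m+2)) x.2]
        rw [Fin.cons_succ]
      rw [this]
      exact hu.comp_embedding e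
    · intro hmem
      apply hv
      have hsub : (Fin.cons v u : Fin (m+2) → Euc N) '' {x | x ≠ 0} ⊆ (A : Set (Euc N)) := by
        rintro _ ⟨x, hx, rfl⟩
        rw [show x = Fin.succ (x.pred hx) from (Fin.succ_pred x hx).symm, Fin.cons_succ]
        exact hr (Set.mem_range_self _)
      have := affineSpan_le.mpr hsub
      have h0 : (Fin.cons v u : Fin (m+2) → Euc N) 0 = v := Fin.cons_zero _ _
      exact this (by rwa [h0] at hmem)
  · rw [Set.singleton_union, ← Set.singleton_union,
      convexHull_convexHull_union_right, Fin.range_cons, Set.singleton_union]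

lemma cone_union {v : Euc N} {S T : Set (Euc N)}
    (hS : Convex ℝ S) (hT : Convex ℝ T) (hSne : S.Nonempty) (hTne : T.Nonempty)
    (hU : Convex ℝ (S ∪ T)) :
    convexHull ℝ ({v} ∪ S) ∪ convexHull ℝ ({v} ∪ T) = convexHull ℝ ({v} ∪ (S ∪ T)) := by
  apply Set.Subset.antisymm
  · exact Set.union_subset
      (convexHull_mono (Set.union_subset_union_right _ Set.subset_union_left))
      (convexHull_mono (Set.union_subset_union_right _ Set.subset_union_right))
  · intro x hx
    rw [mem_coneHull hU (hSne.mono subset_union_left)] at hx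
    obtain ⟨a, q, h0, h1, hq, hx⟩ := hx
    rcases hq with hq | hq
    · exact Or.inl ((mem_coneHull hS hSne).mpr ⟨a, q, h0, h1, hq, hx⟩)
    · exact Or.inr ((mem_coneHull hT hTne).mpr ⟨a, q, h0, h1, hq, hx⟩)

lemma cone_halfspace_le {A : AffineSubspace ℝ (Euc N)} {v : Euc N}
    {T : Set (Euc N)} (hT : Convex ℝ T) (hTne : T.Nonempty)
    (g : Euc N →ₗ[ℝ] ℝ) (c' : ℝ) (hgv : g v = c')
    (hne : (T ∩ {x | g x ≤ c'}).Nonempty) :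
    convexHull ℝ ({v} ∪ (T ∩ {x | g x ≤ c'})) = convexHull ℝ ({v} ∪ T) ∩ {x | g x ≤ c'} := by
  have hT1 : Convex ℝ (T ∩ {x | g x ≤ c'}) := hT.inter (convex_halfSpace_le g.isLinear c')
  apply Set.Subset.antisymm
  · intro x hx
    rw [mem_coneHull hT1 hne] at hx
    obtain ⟨a, q, h0, h1, ⟨hqT, hqg⟩, hx⟩ := hx
    refine ⟨(mem_coneHull hT hTne).mpr ⟨a, q, h0, h1, hqT, hx⟩, ?_⟩
    have : g x = a * c' + (1 - a) * g q := by
      rw [hx, map_add, _root_.map_smul, _root_.map_smul, smul_eq_mul, smul_eq_mul, hgv]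
    have hqg' := hqg
    simp only [Set.mem_setOf_eq] at hqg' ⊢
    rw [this]
    nlinarith [hqg', h0, h1]
  · rintro x ⟨hx, hxg⟩
    rw [mem_coneHull hT hTne] at hx
    obtain ⟨a, q, h0, h1, hq, hx⟩ := hx
    have hgx : g x = a * c' + (1 - a) * g q := by
      rw [hx, map_add, _root_.map_smul, _root_.map_smul, smul_eq_mul, smul_eq_mul, hgv]
    rcases eq_or_lt_of_le h1 with rfl | ha
    · have : x = v := by rw [hx]; simp
      rw [this]
      exact subset_convexHull ℝ _ (Or.inl rfl)
    · have hqg : g q ≤ c' := by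
        simp only [Set.mem_setOf_eq, hgx] at hxg
        nlinarith
      exact (mem_coneHull hT1 hne).mpr ⟨a, q, h0, h1, ⟨hq, hqg⟩, hx⟩

lemma cone_halfspace_ge {A : AffineSubspace ℝ (Euc N)} {v : Euc N}
    {T : Set (Euc N)} (hT : Convex ℝ T) (hTne : T.Nonempty)
    (g : Euc N →ₗ[ℝ] ℝ) (c' : ℝ) (hgv : g v = c')
    (hne : (T ∩ {x | c' ≤ g x}).Nonempty) :
    convexHull ℝ ({v} ∪ (T ∩ {x | c' ≤ g x})) = convexHull ℝ ({v} ∪ T) ∩ {x | c' ≤ g x} := by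
  have hT1 : Convex ℝ (T ∩ {x | c' ≤ g x}) := hT.inter (convex_halfSpace_ge g.isLinear c')
  apply Set.Subset.antisymm
  · intro x hx
    rw [mem_coneHull hT1 hne] at hx
    obtain ⟨a, q, h0, h1, ⟨hqT, hqg⟩, hx⟩ := hx
    refine ⟨(mem_coneHull hT hTne).mpr ⟨a, q, h0, h1, hqT, hx⟩, ?_⟩
    have : g x = a * c' + (1 - a) * g q := by
      rw [hx, map_add, _root_.map_smul, _root_.map_smul, smul_eq_mul, smul_eq_mul, hgv]
    have hqg' := hqg
    simp only [Set.mem_setOf_eq] at hqg' ⊢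
    rw [this]
    nlinarith [hqg', h0, h1]
  · rintro x ⟨hx, hxg⟩
    rw [mem_coneHull hT hTne] at hx
    obtain ⟨a, q, h0, h1, hq, hx⟩ := hx
    have hgx : g x = a * c' + (1 - a) * g q := by
      rw [hx, map_add, _root_.map_smul, _root_.map_smul, smul_eq_mul, smul_eq_mul, hgv]
    rcases eq_or_lt_of_le h1 with rfl | ha
    · have : x = v := by rw [hx]; simp
      rw [this]
      exact subset_convexHull ℝ _ (Or.inl rfl)
    · have hqg : c' ≤ g q := by
        simp only [Set.mem_setOf_eq, hgx] at hxg
        nlinarith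
      exact (mem_coneHull hT1 hne).mpr ⟨a, q, h0, h1, ⟨hq, hqg⟩, hx⟩

/-- adjust a functional so that the hyperplane passes through the apex. -/
lemma exists_functional {Q : Set (Euc N)} (hQne : Q.Nonempty) {v : Euc N}
    (hv : v ∉ affineSpan ℝ Q) (f : Euc N →ₗ[ℝ] ℝ) (c : ℝ) :
    ∃ (g : Euc N →ₗ[ℝ] ℝ) (c' : ℝ), g v = c' ∧
      ∀ q ∈ affineSpan ℝ Q, g q - c' = f q - c := by
  obtain ⟨p0, hp0⟩ := hQne
  have hp0' : p0 ∈ affineSpan ℝ Q := subset_affineSpan ℝ Q hp0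
  set V := (affineSpan ℝ Q).direction with hV
  set d : Euc N := v - p0 with hd
  have hdV : d ∉ V := by
    intro hmem
    exact hv (by simpa [hd] using AffineSubspace.vadd_mem_of_mem_direction hmem hp0')
  set u0 : Euc N := d - (V.orthogonalProjection d : Euc N) with hu0
  have hu0V : u0 ∈ Vᗮ := Submodule.sub_starProjection_mem_orthogonal (K := V) d
  have hu0ne : u0 ≠ 0 := by
    intro h0
    apply hdV
    have : d = (V.orthogonalProjection d : Euc N) := by
      have := sub_eq_zero.mp (by rw [← hu0]; exact h0)
      exact this
    rw [this]; exact (V.orthogonalProjection d).2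
  have horthz : ∀ z ∈ V, (inner ℝ u0 z : ℝ) = 0 := fun z hz => by
    rw [real_inner_comm]; exact hu0V z hz
  have hnorm : (inner ℝ u0 d : ℝ) = ‖u0‖ ^ 2 := by
    have h1 : (inner ℝ u0 ((V.orthogonalProjection d : Euc N)) : ℝ) = 0 :=
      horthz _ (V.orthogonalProjection d).2
    have : d = u0 + (V.orthogonalProjection d : Euc N) := by rw [hu0]; abel
    rw [this, inner_add_right, h1, real_inner_self_eq_norm_sq]
    ring
  have hnorm_ne : ‖u0‖ ^ 2 ≠ 0 := by
    simpa using hu0ne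
  set k : ℝ := (c - f v) / ‖u0‖ ^ 2 with hk
  set ℓ : Euc N →ₗ[ℝ] ℝ := k • (innerₛₗ ℝ u0) with hℓ
  refine ⟨f + ℓ, (f + ℓ) v, rfl, ?_⟩
  intro q hq
  have hqV : q - p0 ∈ V := by
    simpa using AffineSubspace.vsub_mem_direction hq hp0'
  have horth : (inner ℝ u0 (q - p0) : ℝ) = 0 := horthz _ hqV
  have hℓq : ℓ q - ℓ v = -(c - f v) := by
    have h1 : ℓ q - ℓ v = k * (inner ℝ u0 (q - v) : ℝ) := by
      simp only [hℓ, LinearMap.smul_apply, innerₛₗ_apply_apply, smul_eq_mul, inner_sub_right]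
      ring
    have h2 : (inner ℝ u0 (q - v) : ℝ) = -(‖u0‖ ^ 2) := by
      have : q - v = (q - p0) - d := by rw [hd]; abel
      rw [this, inner_sub_right, horth, hnorm]; ring
    rw [h1, h2, hk]
    field_simp
  simp only [LinearMap.add_apply]
  linarith [hℓq]


lemma simplex_props {m : ℕ} {S : Set (Euc N)} (h : IsSimplex m S) :
    Convex ℝ S ∧ S.Nonempty := by
  obtain ⟨u, hu, rfl⟩ := h
  exact ⟨convex_convexHull ℝ _, (Set.range_nonempty u).convexHull⟩

lemma image_erase_injOn {α β : Type*} [DecidableEq α] [DecidableEq β] {f : α → β}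
    {F : Finset α} (hinj : Set.InjOn f F) {T : α} (hT : T ∈ F) :
    (F.erase T).image f = (F.image f).erase (f T) := by
  ext b
  simp only [Finset.mem_image, Finset.mem_erase]
  constructor
  · rintro ⟨S, ⟨hST, hS⟩, rfl⟩
    exact ⟨fun h => hST (hinj hS hT h), S, hS, rfl⟩
  · rintro ⟨hb, S, hS, rfl⟩
    exact ⟨S, ⟨fun h => hb (by rw [h]), hS⟩, rfl⟩

lemma move_cone {Q : Set (Euc N)} {v : Euc N} (hv : v ∉ affineSpan ℝ Q) {m : ℕ}
    {F G : Finset (Set (Euc N))}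
    (hF : ∀ T ∈ F, IsSimplex m T ∧ T ⊆ Q) (hmove : ElemMove m F G) :
    ElemMove (m + 1) (F.image fun S => convexHull ℝ ({v} ∪ S))
      (G.image fun S => convexHull ℝ ({v} ∪ S)) ∧ (∀ T ∈ G, IsSimplex m T ∧ T ⊆ Q) := by
  have hQA : Q ⊆ (affineSpan ℝ Q : Set (Euc N)) := subset_affineSpan ℝ Q
  have hprops : ∀ T ∈ F, Convex ℝ T ∧ T.Nonempty ∧ T ⊆ (affineSpan ℝ Q : Set (Euc N)) :=
    fun T hT => ⟨(simplex_props (hF T hT).1).1, (simplex_props (hF T hT).1).2,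
      (hF T hT).2.trans hQA⟩
  have hinj : Set.InjOn (fun S => convexHull ℝ ({v} ∪ S)) F := by
    intro S hS T hT hEq
    obtain ⟨cS, nS, aS⟩ := hprops S hS
    obtain ⟨cT, nT, aT⟩ := hprops T hT
    exact cone_injOn hv aS cS nS aT cT nT hEq
  rcases hmove with ⟨T, hTF, T₁, T₂, hdis, rfl⟩ | ⟨T₁, h1F, T₂, h2F, hne12, hSimpU, rfl⟩
  · -- dissection case
    obtain ⟨hS1, hS2, hunion, hneq, f, c, hf0, hT1eq, hT2eq, u, hu, hTeq, s, hscard, hsval⟩ := hdis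
    obtain ⟨cT, nT, aT⟩ := hprops T hTF
    have h1T : T₁ ⊆ T := by rw [hT1eq]; exact Set.inter_subset_left
    have h2T : T₂ ⊆ T := by rw [hT2eq]; exact Set.inter_subset_left
    obtain ⟨c1, n1⟩ := simplex_props hS1
    obtain ⟨c2, n2⟩ := simplex_props hS2
    have a1 : T₁ ⊆ (affineSpan ℝ Q : Set (Euc N)) := h1T.trans aT
    have a2 : T₂ ⊆ (affineSpan ℝ Q : Set (Euc N)) := h2T.trans aT
    have hQne : Q.Nonempty := nT.mono (hF T hTF).2
    obtain ⟨g, c', hgv, hgq⟩ := exists_functional hQne hv f c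
    have hiff : ∀ x ∈ (affineSpan ℝ Q : Set (Euc N)), (f x ≤ c ↔ g x ≤ c') := by
      intro x hx
      have := hgq x hx
      constructor <;> intro <;> linarith
    have hT1g : T₁ = T ∩ {x | g x ≤ c'} := by
      rw [hT1eq]
      ext x
      simp only [Set.mem_inter_iff, Set.mem_setOf_eq]
      exact and_congr_right fun hxT => hiff x (aT hxT)
    have hT2g : T₂ = T ∩ {x | c' ≤ g x} := by
      rw [hT2eq]
      ext x
      simp only [Set.mem_inter_iff, Set.mem_setOf_eq]
      refine and_congr_right fun hxT => ?_
      have := hgq x (aT hxT)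
      constructor <;> intro <;> linarith
    -- nonzero functional
    have hg0 : g ≠ 0 := by
      have hdiff : ∃ x, (x ∈ T₁ ∧ x ∉ T₂) ∨ (x ∈ T₂ ∧ x ∉ T₁) := by
        by_contra hc
        push_neg at hc
        apply hneq
        ext x
        have := hc x
        tauto
      intro h0
      obtain ⟨x, hx⟩ := hdiff
      rcases hx with ⟨hx1, hx2⟩ | ⟨hx2, hx1⟩
      · obtain ⟨y, hy⟩ := n2
        have hyT : y ∈ T := h2T hy
        have hfy : c ≤ f y := by rw [hT2eq] at hy; exact hy.2
        have hxT : x ∈ T := h1T hx1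
        have hfx : f x ≤ c := by rw [hT1eq] at hx1; exact hx1.2
        have hfx' : f x < c := by
          rcases lt_or_eq_of_le hfx with h | h
          · exact h
          · exact absurd (by rw [hT2eq]; exact ⟨hxT, le_of_eq h.symm⟩) hx2
        have e1 := hgq x (aT hxT)
        have e2 := hgq y (aT hyT)
        rw [h0] at e1 e2
        simp only [LinearMap.zero_apply] at e1 e2
        linarith
      · obtain ⟨y, hy⟩ := n1
        have hyT : y ∈ T := h1T hy
        have hfy : f y ≤ c := by rw [hT1eq] at hy; exact hy.2
        have hxT : x ∈ T := h2T hx2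
        have hfx : c ≤ f x := by rw [hT2eq] at hx2; exact hx2.2
        have hfx' : c < f x := by
          rcases lt_or_eq_of_le hfx with h | h
          · exact h
          · exact absurd (by rw [hT1eq]; exact ⟨hxT, le_of_eq h.symm⟩) hx1
        have e1 := hgq x (aT hxT)
        have e2 := hgq y (aT hyT)
        rw [h0] at e1 e2
        simp only [LinearMap.zero_apply] at e1 e2
        linarith
    -- simplex structures
    obtain ⟨u₁, hu₁, hT1u⟩ := hS1
    obtain ⟨u₂, hu₂, hT2u⟩ := hS2
    have hr : Set.range u ⊆ (affineSpan ℝ Q : Set (Euc N)) := by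
      refine (subset_convexHull ℝ _).trans ?_
      rw [← hTeq]; exact aT
    have hr1 : Set.range u₁ ⊆ (affineSpan ℝ Q : Set (Euc N)) := by
      refine (subset_convexHull ℝ _).trans ?_
      rw [← hT1u]; exact a1
    have hr2 : Set.range u₂ ⊆ (affineSpan ℝ Q : Set (Euc N)) := by
      refine (subset_convexHull ℝ _).trans ?_
      rw [← hT2u]; exact a2
    have hw := cone_simplex hv hu hr
    have hw1 := cone_simplex hv hu₁ hr1
    have hw2 := cone_simplex hv hu₂ hr2
    constructor
    · left
      refine ⟨convexHull ℝ ({v} ∪ T), Finset.mem_image_of_mem _ hTF,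
        convexHull ℝ ({v} ∪ T₁), convexHull ℝ ({v} ∪ T₂), ?_, ?_⟩
      · refine ⟨⟨Fin.cons v u₁, hw1.1, by rw [hT1u]; exact hw1.2⟩,
          ⟨Fin.cons v u₂, hw2.1, by rw [hT2u]; exact hw2.2⟩, ?_, ?_, ?_⟩
        · rw [cone_union c1 c2 n1 n2 (by rw [hunion]; exact cT), hunion]
        · intro hEq
          exact hneq (cone_injOn hv a1 c1 n1 a2 c2 n2 hEq)
        · refine ⟨g, c', hg0, ?_, ?_, ?_⟩
          · rw [hT1g]
            exact cone_halfspace_le (A := affineSpan ℝ Q) cT nT g c' hgv (by rw [← hT1g]; exact n1)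
          · rw [hT2g]
            exact cone_halfspace_ge (A := affineSpan ℝ Q) cT nT g c' hgv (by rw [← hT2g]; exact n2)
          · refine ⟨Fin.cons v u, hw.1, by rw [hTeq]; exact hw.2, ?_⟩
            have hcard : m ≤ (insert (0 : Fin (m + 2)) (s.map (Fin.succEmb (m + 1)))).card := by
              rw [Finset.card_insert_of_notMem (by
                simp only [Finset.mem_map]
                rintro ⟨j, hj, hj0⟩
                exact Fin.succ_ne_zero j hj0), Finset.card_map, hscard]
              omega
            obtain ⟨s', hs'sub, hs'card⟩ :=
              Finset.exists_subset_card_eq hcard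
            refine ⟨s', by rw [hs'card]; omega, ?_⟩
            intro i hi
            have hi' := hs'sub hi
            rw [Finset.mem_insert] at hi'
            rcases hi' with rfl | hi'
            · rw [Fin.cons_zero]; exact hgv
            · obtain ⟨j, hj, rfl⟩ := Finset.mem_map.mp hi'
              have : (Fin.succEmb (m + 1)) j = Fin.succ j := rfl
              rw [this, Fin.cons_succ]
              have huj : u j ∈ (affineSpan ℝ Q : Set (Euc N)) := hr (Set.mem_range_self j)
              have := hgq (u j) huj
              have := hsval j hj
              linarith
      · rw [Finset.image_insert, Finset.image_insert, image_erase_injOn hinj hTF]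
    · intro T' hT'
      rw [Finset.mem_insert, Finset.mem_insert] at hT'
      rcases hT' with rfl | rfl | hT'
      · exact ⟨⟨u₁, hu₁, hT1u⟩, h1T.trans (hF T hTF).2⟩
      · exact ⟨⟨u₂, hu₂, hT2u⟩, h2T.trans (hF T hTF).2⟩
      · exact hF T' (Finset.erase_subset _ _ hT')
  · -- merge case
    obtain ⟨c1, n1, a1⟩ := hprops T₁ h1F
    obtain ⟨c2, n2, a2⟩ := hprops T₂ h2F
    obtain ⟨uU, huU, hUeq⟩ := hSimpU
    have cU : Convex ℝ (T₁ ∪ T₂) := by rw [hUeq]; exact convex_convexHull ℝ _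
    have aU : T₁ ∪ T₂ ⊆ (affineSpan ℝ Q : Set (Euc N)) := Set.union_subset a1 a2
    have hrU : Set.range uU ⊆ (affineSpan ℝ Q : Set (Euc N)) := by
      refine (subset_convexHull ℝ _).trans ?_
      rw [← hUeq]; exact aU
    have hwU := cone_simplex hv huU hrU
    have cu : convexHull ℝ ({v} ∪ T₁) ∪ convexHull ℝ ({v} ∪ T₂) =
        convexHull ℝ ({v} ∪ (T₁ ∪ T₂)) := cone_union c1 c2 n1 n2 cU
    constructor
    · right
      refine ⟨convexHull ℝ ({v} ∪ T₁), Finset.mem_image_of_mem _ h1F,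
        convexHull ℝ ({v} ∪ T₂), Finset.mem_image_of_mem _ h2F, ?_, ?_, ?_⟩
      · intro hEq
        exact hne12 (cone_injOn hv a1 c1 n1 a2 c2 n2 hEq)
      · rw [cu]
        exact ⟨Fin.cons v uU, hwU.1, by rw [hUeq]; exact hwU.2⟩
      · rw [Finset.image_insert, cu,
          image_erase_injOn (hinj.mono (fun x hx => Finset.erase_subset _ _ hx))
            (Finset.mem_erase.mpr ⟨hne12.symm, h2F⟩),
          image_erase_injOn hinj h1F]
    · intro T' hT'
      rw [Finset.mem_insert] at hT'
      rcases hT' with rfl | hT'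
      · exact ⟨⟨uU, huU, hUeq⟩, Set.union_subset (hF T₁ h1F).2 (hF T₂ h2F).2⟩
      · exact hF T' (Finset.erase_subset _ _ (Finset.erase_subset _ _ hT'))

end PyramidAux

/-- coning equivalent triangulations of the base of a pyramid to the apex
yields equivalent triangulations of the pyramid. -/
theorem pyramid_cone_equiv {N n : ℕ} (hn : 1 ≤ n) (Q : Set (Euc N)) (hQ : IsPolytope Q)
    (hdimQ : sdim Q = n - 1) (v : Euc N) (hv : v ∉ affineSpan ℝ Q)
    (α β : Finset (Set (Euc N)))
    (hα : IsTriangulation (n - 1) Q α) (hβ : IsTriangulation (n - 1) Q β)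
    (h : MoveEquiv (n - 1) α β) :
    MoveEquiv n (α.image fun S => convexHull ℝ ({v} ∪ S))
      (β.image fun S => convexHull ℝ ({v} ∪ S)) := by
  classical
  obtain ⟨m, rfl⟩ : ∃ m, n = m + 1 := ⟨n - 1, (Nat.succ_pred_eq_of_pos hn).symm⟩
  simp only [Nat.add_sub_cancel] at hα hβ h hdimQ
  have hInvα : ∀ T ∈ α, IsSimplex m T ∧ T ⊆ Q := by
    intro T hT
    refine ⟨hα.1 T hT, ?_⟩
    rw [← hα.2.1]
    intro x hx
    exact Set.mem_biUnion hT hx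
  have key : ∀ G : Finset (Set (Euc N)), Relation.ReflTransGen (ElemMove m) α G →
      MoveEquiv (m + 1) (α.image fun S => convexHull ℝ ({v} ∪ S))
        (G.image fun S => convexHull ℝ ({v} ∪ S)) ∧ (∀ T ∈ G, IsSimplex m T ∧ T ⊆ Q) := by
    intro G hG
    induction hG with
    | refl => exact ⟨Relation.ReflTransGen.refl, hInvα⟩
    | tail hsteps hstep ih =>
      obtain ⟨e1, inv1⟩ := ih
      obtain ⟨e2, inv2⟩ := PyramidAux.move_cone hv inv1 hstep
      exact ⟨e1.tail e2, inv2⟩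
  exact (key β h).1
end
end

section
/- If μ₁ and μ₂ are valuations on the set P^n of polytopes of dimension at most n in R^N that agree on all simplices of dimension at most n, then μ₁ = μ₂ on P^n. -/
open Set MeasureTheory
open scoped Classical
noncomputable section

namespace ValAux

variable {N : ℕ}

theorem mem_hull_iff (t : Finset (Euc N)) (x : Euc N) :
    x ∈ convexHull ℝ (t : Set (Euc N)) ↔
      ∃ w : Euc N → ℝ, (∀ y ∈ t, 0 ≤ w y) ∧ (∑ y ∈ t, w y) = 1 ∧ (∑ y ∈ t, w y • y) = x := by
  rw [Finset.convexHull_eq]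
  constructor
  · rintro ⟨w, h0, h1, hx⟩
    refine ⟨w, h0, h1, ?_⟩
    rw [Finset.centerMass_eq_of_sum_1 _ _ h1] at hx
    simpa using hx
  · rintro ⟨w, h0, h1, hx⟩
    refine ⟨w, h0, h1, ?_⟩
    rw [Finset.centerMass_eq_of_sum_1 _ _ h1]
    simpa using hx

/-- An affine dependence among the points of `t`. -/
def IsDep (t : Finset (Euc N)) (w : Euc N → ℝ) : Prop :=
  (∑ y ∈ t, w y) = 0 ∧ (∑ y ∈ t, w y • y) = (0 : Euc N) ∧ ∃ y ∈ t, w y ≠ 0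

/-- The smaller of the two class sizes of a dependence. -/
def mcl (t : Finset (Euc N)) (w : Euc N → ℝ) : ℕ :=
  min (t.filter fun y => 0 < w y).card (t.filter fun y => w y < 0).card

/-- The minimal class size over all dependences of `t`. -/
def cM (t : Finset (Euc N)) : ℕ := sInf {j | ∃ w, IsDep t w ∧ mcl t w = j}

theorem IsDep.neg {t : Finset (Euc N)} {w : Euc N → ℝ} (h : IsDep t w) :
    IsDep t (fun y => - w y) := by
  obtain ⟨h1, h2, y, hy, hy0⟩ := h
  refine ⟨by simp [h1], by simp [neg_smul, h2], y, hy, by simpa using hy0⟩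

theorem IsDep.pos_nonempty {t : Finset (Euc N)} {w : Euc N → ℝ} (h : IsDep t w) :
    (t.filter fun y => 0 < w y).Nonempty := by
  by_contra hne
  have hle : ∀ z ∈ t, w z ≤ 0 := by
    intro z hz
    by_contra h'
    exact hne ⟨z, Finset.mem_filter.2 ⟨hz, lt_of_not_ge h'⟩⟩
  obtain ⟨y, hy, hy0⟩ := h.2.2
  have hz : ∀ z ∈ t, (fun z => -w z) z = 0 := by
    rw [← Finset.sum_eq_zero_iff_of_nonneg (fun z hz => by simpa using hle z hz)]
    simp [h.1]
  have := hz y hy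
  simp only [neg_eq_zero] at this
  exact hy0 this

theorem IsDep.neg_nonempty {t : Finset (Euc N)} {w : Euc N → ℝ} (h : IsDep t w) :
    (t.filter fun y => w y < 0).Nonempty := by
  have := h.neg.pos_nonempty
  simpa [neg_pos] using this

theorem cM_le_card (t : Finset (Euc N)) : cM t ≤ t.card := by
  rcases Set.eq_empty_or_nonempty {j | ∃ w, IsDep t w ∧ mcl t w = j} with h | h
  · simp [cM, h]
  · obtain ⟨w, _, hm⟩ := Nat.sInf_mem h
    calc cM t = mcl t w := hm.symm
    _ ≤ (t.filter fun y => 0 < w y).card := min_le_left _ _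
    _ ≤ t.card := Finset.card_filter_le _ _

theorem one_le_cM {t : Finset (Euc N)} (h : ∃ w, IsDep t w) : 1 ≤ cM t := by
  have hS : {j | ∃ w, IsDep t w ∧ mcl t w = j}.Nonempty := by
    obtain ⟨w, hw⟩ := h
    exact ⟨mcl t w, w, hw, rfl⟩
  obtain ⟨w, hw, hm⟩ := Nat.sInf_mem hS
  rw [cM, ← hm]
  have h1 := hw.pos_nonempty
  have h2 := hw.neg_nonempty
  exact le_min (Finset.card_pos.2 h1) (Finset.card_pos.2 h2)

theorem sdim_convexHull (s : Set (Euc N)) : sdim (convexHull ℝ s) = sdim s := by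
  unfold sdim
  rw [← direction_affineSpan, affineSpan_convexHull, direction_affineSpan]

theorem sdim_mono {s u : Set (Euc N)} (h : s ⊆ u) : sdim s ≤ sdim u :=
  Submodule.finrank_mono (vectorSpan_mono ℝ h)

theorem hull_erase_of_redundant {t : Finset (Euc N)} {u : Euc N} (hu : u ∈ t)
    (h : u ∈ convexHull ℝ ((t.erase u : Finset (Euc N)) : Set (Euc N))) :
    convexHull ℝ (t : Set (Euc N)) = convexHull ℝ ((t.erase u : Finset (Euc N)) : Set (Euc N)) := by
  refine le_antisymm ?_ (convexHull_mono (by exact_mod_cast Finset.erase_subset _ _))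
  refine convexHull_min ?_ (convex_convexHull ℝ _)
  intro y hy
  rcases eq_or_ne y u with rfl | hne
  · exact h
  · exact subset_convexHull ℝ _ (Finset.mem_coe.2 (Finset.mem_erase.2 ⟨hne, Finset.mem_coe.1 hy⟩))

theorem redundant_of_w {t : Finset (Euc N)} {w : Euc N → ℝ} {u : Euc N} (hu : u ∈ t)
    (hsum : (∑ y ∈ t, w y) = 0) (hvec : (∑ y ∈ t, w y • y) = (0 : Euc N))
    (hwu : 0 < w u) (hle : ∀ y ∈ t, y ≠ u → w y ≤ 0) :
    u ∈ convexHull ℝ ((t.erase u : Finset (Euc N)) : Set (Euc N)) := by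
  rw [mem_hull_iff]
  have hsum' : (∑ y ∈ t.erase u, w y) = - w u := by
    have h := Finset.sum_erase_add t w hu
    linarith
  have hvec' : (∑ y ∈ t.erase u, w y • y) = - (w u • u) := by
    have h := Finset.sum_erase_add t (fun y => w y • y) hu
    rw [hvec] at h
    linear_combination (norm := module) h
  refine ⟨fun y => -(w y) / w u, ?_, ?_, ?_⟩
  · intro y hy
    have := hle y (Finset.mem_of_mem_erase hy) (Finset.ne_of_mem_erase hy)
    have : 0 ≤ -(w y) := by linarith
    positivity
  · rw [← Finset.sum_div]
    rw [Finset.sum_neg_distrib, hsum', neg_neg, div_self hwu.ne']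
  · have : ∀ y ∈ t.erase u, (-(w y) / w u) • y = (w u)⁻¹ • ((-(w y)) • y) := by
      intro y _
      rw [div_eq_inv_mul, mul_smul]
    rw [Finset.sum_congr rfl this, ← Finset.smul_sum]
    simp only [neg_smul]
    rw [Finset.sum_neg_distrib, hvec', neg_neg, smul_smul, inv_mul_cancel₀ hwu.ne', one_smul]

theorem exists_simplex_of_no_dep {t : Finset (Euc N)} (ht : t.Nonempty)
    (h : ¬ ∃ w, IsDep t w) :
    IsSimplex (t.card - 1) (convexHull ℝ (t : Set (Euc N))) ∧
      sdim (convexHull ℝ (t : Set (Euc N))) = t.card - 1 := by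
  have hk : t.card - 1 + 1 = t.card := Nat.succ_pred_eq_of_pos (Finset.card_pos.2 ht)
  have e : Fin (t.card - 1 + 1) ≃ ↥t :=
    (finCongr hk).trans (Fintype.equivFinOfCardEq (Fintype.card_coe t)).symm
  set v : Fin (t.card - 1 + 1) → Euc N := fun i => ((e i : ↥t) : Euc N) with hv
  have hinj : Function.Injective v := Subtype.coe_injective.comp e.injective
  have hrange : Set.range v = (t : Set (Euc N)) := by
    ext y
    constructor
    · rintro ⟨i, rfl⟩
      exact (e i).2
    · intro hy
      exact ⟨e.symm ⟨y, hy⟩, by simp [hv]⟩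
  have hind : AffineIndependent ℝ v := by
    rw [affineIndependent_iff]
    intro s w hw0 hwv
    by_contra hne
    push_neg at hne
    obtain ⟨i, hi, hwi⟩ := hne
    set W : Euc N → ℝ := fun y => ∑ j ∈ s.filter (fun j => v j = y), w j with hW
    have hmaps : ∀ j ∈ s, v j ∈ t := fun j _ => (e j).2
    have hsum : (∑ y ∈ t, W y) = 0 := by
      rw [hW]
      rw [Finset.sum_fiberwise_of_maps_to hmaps]
      exact hw0
    have hvec : (∑ y ∈ t, W y • y) = (0 : Euc N) := by
      have : ∀ y ∈ t, W y • y = ∑ j ∈ s.filter (fun j => v j = y), w j • v j := by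
        intro y _
        show (∑ j ∈ s.filter (fun j => v j = y), w j) • y = _
        rw [Finset.sum_smul]
        refine Finset.sum_congr rfl ?_
        intro j hj
        rw [(Finset.mem_filter.1 hj).2]
      rw [Finset.sum_congr rfl this, Finset.sum_fiberwise_of_maps_to hmaps]
      exact hwv
    have hWvi : W (v i) = w i := by
      show (∑ j ∈ s.filter (fun j => v j = v i), w j) = w i
      have : s.filter (fun j => v j = v i) = {i} := by
        ext j
        simp only [Finset.mem_filter, Finset.mem_singleton]
        constructor
        · rintro ⟨_, hj⟩
          exact hinj hj
        · rintro rfl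
          exact ⟨hi, rfl⟩
      rw [this, Finset.sum_singleton]
    exact h ⟨W, hsum, hvec, v i, hmaps i hi, by rw [hWvi]; exact hwi⟩
  refine ⟨⟨v, hind, by rw [hrange]⟩, ?_⟩
  rw [sdim_convexHull]
  unfold sdim
  rw [← hrange]
  exact hind.finrank_vectorSpan (by simp)

variable {t : Finset (Euc N)} {u v z : Euc N} {γ : ℝ}

theorem piece_mem (hu : u ∈ t) (hv : v ∈ t) (hne : u ≠ v)
    (hγ0 : 0 < γ) (hγ1 : γ < 1) (hzdef : z = (1 - γ) • u + γ • v) (hz : z ∉ t)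
    {lam : Euc N → ℝ} {x : Euc N} (h0 : ∀ y ∈ t, 0 ≤ lam y) (h1 : (∑ y ∈ t, lam y) = 1)
    (hx : (∑ y ∈ t, lam y • y) = x)
    (hcase : lam u * γ ≤ lam v * (1 - γ)) :
    x ∈ convexHull ℝ ((insert z (t.erase u) : Finset (Euc N)) : Set (Euc N)) := by
  have h1γ : (0:ℝ) < 1 - γ := by linarith
  set ε : ℝ := lam u / (1 - γ) with hε
  have hεnn : 0 ≤ ε := div_nonneg (h0 u hu) h1γ.le
  have heps : ε * (1 - γ) = lam u := div_mul_cancel₀ _ h1γ.ne'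
  have hvz : v ≠ z := fun h => hz (h ▸ hv)
  have hv' : v ∈ t.erase u := Finset.mem_erase.2 ⟨hne.symm, hv⟩
  have hzne : z ∉ t.erase u := fun h => hz (Finset.mem_of_mem_erase h)
  set W : Euc N → ℝ := fun y => if y = z then ε else if y = v then lam v - ε * γ else lam y
    with hW
  have hWz : W z = ε := by simp [hW]
  have hWv : W v = lam v - ε * γ := by simp [hW, hvz]
  have hWdd : ∀ y ∈ (t.erase u).erase v, W y = lam y := by
    intro y hy
    have hyt : y ∈ t := Finset.mem_of_mem_erase (Finset.mem_of_mem_erase hy)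
    have h1 : y ≠ z := fun h => hz (h ▸ hyt)
    have h2 : y ≠ v := Finset.ne_of_mem_erase hy
    simp [hW, h1, h2]
  have a1 : (∑ y ∈ t.erase u, lam y) + lam u = 1 := by
    rw [Finset.sum_erase_add t lam hu]; exact h1
  have a2 : (∑ y ∈ (t.erase u).erase v, lam y) + lam v = ∑ y ∈ t.erase u, lam y :=
    Finset.sum_erase_add _ lam hv'
  have b1 : (∑ y ∈ t.erase u, lam y • y) + lam u • u = x := by
    rw [Finset.sum_erase_add t _ hu]; exact hx
  have b2 : (∑ y ∈ (t.erase u).erase v, lam y • y) + lam v • v = ∑ y ∈ t.erase u, lam y • y :=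
    Finset.sum_erase_add _ _ hv'
  rw [mem_hull_iff]
  refine ⟨W, ?_, ?_, ?_⟩
  · intro y hy
    rcases Finset.mem_insert.1 hy with rfl | hy'
    · rw [hWz]; exact hεnn
    · by_cases hyv : y = v
      · rw [hyv, hWv]
        have : ε * γ ≤ lam v := by
          rw [hε, div_mul_eq_mul_div, div_le_iff₀ h1γ]
          linarith
        linarith
      · rw [hWdd y (Finset.mem_erase.2 ⟨hyv, hy'⟩)]
        exact h0 y (Finset.mem_of_mem_erase hy')
  · rw [Finset.sum_insert hzne, hWz, ← Finset.sum_erase_add _ W hv', hWv,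
      Finset.sum_congr rfl hWdd]
    linarith
  · rw [Finset.sum_insert hzne, hWz, ← Finset.sum_erase_add _ (fun y => W y • y) hv', hWv]
    have : ∀ y ∈ (t.erase u).erase v, W y • y = lam y • y := by
      intro y hy; rw [hWdd y hy]
    rw [Finset.sum_congr rfl this, hzdef]
    have hsm : (ε * (1 - γ)) • u = lam u • u := by rw [heps]
    linear_combination (norm := module) b1 + b2 + hsm

theorem hull_split_union (hu : u ∈ t) (hv : v ∈ t) (hne : u ≠ v)
    (hγ0 : 0 < γ) (hγ1 : γ < 1) (hzdef : z = (1 - γ) • u + γ • v) (hz : z ∉ t) :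
    convexHull ℝ (t : Set (Euc N)) =
      convexHull ℝ ((insert z (t.erase u) : Finset (Euc N)) : Set (Euc N)) ∪
        convexHull ℝ ((insert z (t.erase v) : Finset (Euc N)) : Set (Euc N)) := by
  have hzmem : z ∈ convexHull ℝ (t : Set (Euc N)) := by
    rw [hzdef]
    exact (convex_convexHull ℝ _) (subset_convexHull ℝ _ hu) (subset_convexHull ℝ _ hv)
      (by linarith) hγ0.le (by ring)
  refine le_antisymm ?_ ?_
  · intro x hx
    rw [mem_hull_iff] at hx
    obtain ⟨lam, h0, h1, hx⟩ := hx
    by_cases hcase : lam u * γ ≤ lam v * (1 - γ)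
    · exact Or.inl (piece_mem hu hv hne hγ0 hγ1 hzdef hz h0 h1 hx hcase)
    · refine Or.inr (piece_mem (γ := 1 - γ) hv hu hne.symm (by linarith) (by linarith)
        ?_ hz h0 h1 hx ?_)
      · rw [hzdef]; module
      · have hγγ : 1 - (1 - γ) = γ := by ring
        rw [hγγ]
        linarith [lt_of_not_ge hcase]
  · refine union_subset ?_ ?_ <;>
    · refine convexHull_min ?_ (convex_convexHull ℝ _)
      intro y hy
      rcases Finset.mem_insert.1 (Finset.mem_coe.1 hy) with rfl | hy'
      · exact hzmem
      · exact subset_convexHull ℝ _ (Finset.mem_coe.2 (Finset.mem_of_mem_erase hy'))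

theorem sigma_eps (A B : ℝ) {γ : ℝ} (hA : 0 ≤ A) (hB : 0 ≤ B) (hγ0 : 0 < γ) (hγ1 : γ < 1) :
    ∃ σ ε : ℝ, 0 ≤ σ ∧ σ ≤ 1 ∧ 0 ≤ ε ∧ σ * A = ε * (1 - γ) ∧ (1 - σ) * B = ε * γ := by
  have h1γ : (0:ℝ) < 1 - γ := by linarith
  by_cases hD : A * γ + B * (1 - γ) = 0
  · have h1 : A = 0 := by nlinarith
    have h2 : B = 0 := by nlinarith
    exact ⟨0, 0, le_refl 0, by norm_num, le_refl 0, by rw [h1]; ring, by rw [h2]; ring⟩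
  · have hDpos : 0 < A * γ + B * (1 - γ) := by
      rcases lt_or_eq_of_le (by positivity : (0:ℝ) ≤ A * γ + B * (1 - γ)) with h | h
      · exact h
      · exact absurd h.symm hD
    refine ⟨B * (1 - γ) / (A * γ + B * (1 - γ)), A * B / (A * γ + B * (1 - γ)), by positivity,
      ?_, by positivity, ?_, ?_⟩
    · rw [div_le_one hDpos]; nlinarith
    · field_simp
    · rw [one_sub_div hDpos.ne']
      field_simp
      ring

theorem hull_split_inter (hu : u ∈ t) (hv : v ∈ t) (hne : u ≠ v)
    (hγ0 : 0 < γ) (hγ1 : γ < 1) (hzdef : z = (1 - γ) • u + γ • v) (hz : z ∉ t) :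
    convexHull ℝ ((insert z (t.erase u) : Finset (Euc N)) : Set (Euc N)) ∩
      convexHull ℝ ((insert z (t.erase v) : Finset (Euc N)) : Set (Euc N)) =
      convexHull ℝ ((insert z ((t.erase u).erase v) : Finset (Euc N)) : Set (Euc N)) := by
  have h1γ : (0:ℝ) < 1 - γ := by linarith
  have huz : u ≠ z := fun h => hz (h ▸ hu)
  have hvz : v ≠ z := fun h => hz (h ▸ hv)
  refine le_antisymm ?_ ?_
  swap
  · refine subset_inter (convexHull_mono ?_) (convexHull_mono ?_) <;>
      intro y hy <;> rcases Finset.mem_insert.1 (Finset.mem_coe.1 hy) with rfl | hy'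
    · exact Finset.mem_coe.2 (Finset.mem_insert_self _ _)
    · exact Finset.mem_coe.2 (Finset.mem_insert_of_mem (Finset.mem_of_mem_erase hy'))
    · exact Finset.mem_coe.2 (Finset.mem_insert_self _ _)
    · refine Finset.mem_coe.2 (Finset.mem_insert_of_mem ?_)
      exact Finset.mem_erase.2 ⟨Finset.ne_of_mem_erase hy',
        Finset.mem_of_mem_erase (Finset.mem_of_mem_erase hy')⟩
  rintro x ⟨hx₁, hx₂⟩
  rw [mem_hull_iff] at hx₁ hx₂
  obtain ⟨lam, hl0, hl1, hlx⟩ := hx₁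
  obtain ⟨mu, hm0, hm1, hmx⟩ := hx₂
  set T : Finset (Euc N) := insert z t with hT
  have hzt : z ∉ t := hz
  have hsub₁ : insert z (t.erase u) ⊆ T := Finset.insert_subset_insert _ (Finset.erase_subset _ _)
  have hsub₂ : insert z (t.erase v) ⊆ T := Finset.insert_subset_insert _ (Finset.erase_subset _ _)
  set W₁ : Euc N → ℝ := fun y => if y ∈ insert z (t.erase u) then lam y else 0 with hW₁
  set W₂ : Euc N → ℝ := fun y => if y ∈ insert z (t.erase v) then mu y else 0 with hW₂
  have hW₁nn : ∀ y, 0 ≤ W₁ y := by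
    intro y
    by_cases h : y ∈ insert z (t.erase u)
    · simp only [hW₁, if_pos h]; exact hl0 y h
    · simp only [hW₁, if_neg h]; exact le_refl 0
  have hW₂nn : ∀ y, 0 ≤ W₂ y := by
    intro y
    by_cases h : y ∈ insert z (t.erase v)
    · simp only [hW₂, if_pos h]; exact hm0 y h
    · simp only [hW₂, if_neg h]; exact le_refl 0
  have hW₁sum : (∑ y ∈ T, W₁ y) = 1 := by
    rw [← Finset.sum_subset hsub₁ (fun y _ hy => by simp only [hW₁, if_neg hy])]
    rw [show (∑ y ∈ insert z (t.erase u), W₁ y) = ∑ y ∈ insert z (t.erase u), lam y from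
      Finset.sum_congr rfl (fun y hy => by simp only [hW₁, if_pos hy])]
    exact hl1
  have hW₂sum : (∑ y ∈ T, W₂ y) = 1 := by
    rw [← Finset.sum_subset hsub₂ (fun y _ hy => by simp only [hW₂, if_neg hy])]
    rw [show (∑ y ∈ insert z (t.erase v), W₂ y) = ∑ y ∈ insert z (t.erase v), mu y from
      Finset.sum_congr rfl (fun y hy => by simp only [hW₂, if_pos hy])]
    exact hm1
  have hW₁vec : (∑ y ∈ T, W₁ y • y) = x := by
    rw [← Finset.sum_subset hsub₁ (fun y _ hy => by simp only [hW₁, if_neg hy, zero_smul])]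
    rw [show (∑ y ∈ insert z (t.erase u), W₁ y • y) = ∑ y ∈ insert z (t.erase u), lam y • y from
      Finset.sum_congr rfl (fun y hy => by simp only [hW₁, if_pos hy])]
    exact hlx
  have hW₂vec : (∑ y ∈ T, W₂ y • y) = x := by
    rw [← Finset.sum_subset hsub₂ (fun y _ hy => by simp only [hW₂, if_neg hy, zero_smul])]
    rw [show (∑ y ∈ insert z (t.erase v), W₂ y • y) = ∑ y ∈ insert z (t.erase v), mu y • y from
      Finset.sum_congr rfl (fun y hy => by simp only [hW₂, if_pos hy])]
    exact hmx
  have hW₁u : W₁ u = 0 := by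
    have : u ∉ insert z (t.erase u) := by
      simp [Finset.mem_insert, huz]
    simp only [hW₁, if_neg this]
  have hW₂v : W₂ v = 0 := by
    have : v ∉ insert z (t.erase v) := by
      simp [Finset.mem_insert, hvz]
    simp only [hW₂, if_neg this]
  set A : ℝ := W₂ u with hA
  set B : ℝ := W₁ v with hB
  have hAnn : 0 ≤ A := hW₂nn u
  have hBnn : 0 ≤ B := hW₁nn v
  obtain ⟨σ, ε, hσ0, hσ1, hε0, hU, hV⟩ := sigma_eps A B hAnn hBnn hγ0 hγ1
  set r : Euc N → ℝ := fun y => if y = z then 1 else if y = u then -(1-γ) else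
    if y = v then -γ else 0 with hr
  have hrz : r z = 1 := by simp [hr]
  have hru : r u = -(1-γ) := by simp [hr, huz]
  have hrv : r v = -γ := by simp [hr, hvz, hne.symm]
  have hvu' : v ∈ t.erase u := Finset.mem_erase.2 ⟨hne.symm, hv⟩
  have hrdd : ∀ y ∈ (t.erase u).erase v, r y = 0 := by
    intro y hy
    have hyt : y ∈ t := Finset.mem_of_mem_erase (Finset.mem_of_mem_erase hy)
    have h1 : y ≠ z := fun h => hz (h ▸ hyt)
    have h2 : y ≠ v := Finset.ne_of_mem_erase hy
    have h3 : y ≠ u := Finset.ne_of_mem_erase (Finset.mem_of_mem_erase hy)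
    simp [hr, h1, h2, h3]
  have hrsum : (∑ y ∈ T, r y) = 0 := by
    rw [hT, Finset.sum_insert hzt, hrz, ← Finset.sum_erase_add _ r hu,
      ← Finset.sum_erase_add _ r hvu', hrv, hru, Finset.sum_congr rfl hrdd]
    rw [Finset.sum_const_zero]
    ring
  have hrvec : (∑ y ∈ T, r y • y) = (0 : Euc N) := by
    rw [hT, Finset.sum_insert hzt, hrz, ← Finset.sum_erase_add _ (fun y => r y • y) hu,
      ← Finset.sum_erase_add _ (fun y => r y • y) hvu']
    rw [hrv, hru]
    have : ∀ y ∈ (t.erase u).erase v, r y • y = (0:Euc N) := by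
      intro y hy; rw [hrdd y hy, zero_smul]
    rw [Finset.sum_congr rfl this, Finset.sum_const_zero, hzdef]
    module
  set W : Euc N → ℝ := fun y => (1 - σ) * W₁ y + σ * W₂ y + ε * r y with hWdef
  have hWu : W u = 0 := by
    simp only [hWdef, hW₁u, hru]
    rw [hA] at hU
    linarith
  have hWv : W v = 0 := by
    simp only [hWdef, hW₂v, hrv]
    rw [hB] at hV
    linarith
  have hWnn : ∀ y ∈ T, 0 ≤ W y := by
    intro y _
    rcases eq_or_ne y u with rfl | hyu
    · rw [hWu]
    rcases eq_or_ne y v with rfl | hyv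
    · rw [hWv]
    have hry : 0 ≤ r y := by
      simp only [hr]
      split_ifs <;> first | norm_num | (exact absurd (by assumption) hyu) |
        (exact absurd (by assumption) hyv)
    have := hW₁nn y
    have := hW₂nn y
    have h1 : 0 ≤ (1 - σ) * W₁ y := mul_nonneg (by linarith) (hW₁nn y)
    have h2 : 0 ≤ σ * W₂ y := mul_nonneg hσ0 (hW₂nn y)
    have h3 : 0 ≤ ε * r y := mul_nonneg hε0 hry
    simp only [hWdef]
    linarith
  have hWsum : (∑ y ∈ T, W y) = 1 := by
    simp only [hWdef]
    rw [Finset.sum_add_distrib, Finset.sum_add_distrib, ← Finset.mul_sum, ← Finset.mul_sum,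
      ← Finset.mul_sum, hW₁sum, hW₂sum, hrsum]
    ring
  have hWvec : (∑ y ∈ T, W y • y) = x := by
    have : ∀ y ∈ T, W y • y = (1 - σ) • (W₁ y • y) + σ • (W₂ y • y) + ε • (r y • y) := by
      intro y _
      simp only [hWdef, add_smul, mul_smul]
    rw [Finset.sum_congr rfl this, Finset.sum_add_distrib, Finset.sum_add_distrib,
      ← Finset.smul_sum, ← Finset.smul_sum, ← Finset.smul_sum, hW₁vec, hW₂vec, hrvec,
      smul_zero, add_zero, ← add_smul]
    rw [show (1 - σ) + σ = 1 by ring, one_smul]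
  have hs₀T : insert z ((t.erase u).erase v) ⊆ T :=
    Finset.insert_subset_insert _ ((Finset.erase_subset _ _).trans (Finset.erase_subset _ _))
  have hvanish : ∀ y ∈ T, y ∉ insert z ((t.erase u).erase v) → W y = 0 := by
    intro y hyT hyn
    rcases Finset.mem_insert.1 hyT with rfl | hyt
    · exact absurd (Finset.mem_insert_self _ _) hyn
    · have hyz : y ≠ z := fun h => hz (h ▸ hyt)
      rcases eq_or_ne y u with rfl | hyu
      · exact hWu
      rcases eq_or_ne y v with rfl | hyv
      · exact hWv
      · exact absurd (Finset.mem_insert_of_mem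
          (Finset.mem_erase.2 ⟨hyv, Finset.mem_erase.2 ⟨hyu, hyt⟩⟩)) hyn
  rw [mem_hull_iff]
  refine ⟨W, fun y hy => hWnn y (hs₀T hy), ?_, ?_⟩
  · rw [Finset.sum_subset hs₀T hvanish]
    exact hWsum
  · rw [Finset.sum_subset hs₀T (fun y hy hyn => by rw [hvanish y hy hyn, zero_smul])]
    exact hWvec

theorem dep_transfer {t : Finset (Euc N)} {w : Euc N → ℝ} {p q z : Euc N}
    (hp : p ∈ t) (hq : q ∈ t) (hpq : p ≠ q)
    (hwp : 0 < w p) (hwq : 0 < w q)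
    (hsum : (∑ y ∈ t, w y) = 0) (hvec : (∑ y ∈ t, w y • y) = (0:Euc N))
    (hz : z ∉ t)
    (hzv : (w p + w q) • z = w p • p + w q • q)
    {wz : Euc N → ℝ}
    (hz1 : wz z = w p + w q) (hz2 : wz p = 0) (hz3 : wz q = 0)
    (hz4 : ∀ y, y ≠ z → y ≠ p → y ≠ q → wz y = w y) :
    IsDep (insert z (t.erase p)) wz ∧
    (insert z (t.erase p)).filter (fun y => 0 < wz y)
        = insert z (((t.filter fun y => 0 < w y).erase p).erase q) ∧
    (insert z (t.erase p)).filter (fun y => wz y < 0) = t.filter (fun y => w y < 0) := by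
  have hzp : z ≠ p := fun h => hz (h ▸ hp)
  have hzq : z ≠ q := fun h => hz (h ▸ hq)
  have hq' : q ∈ t.erase p := Finset.mem_erase.2 ⟨hpq.symm, hq⟩
  have hzne : z ∉ t.erase p := fun h => hz (Finset.mem_of_mem_erase h)
  have hdd : ∀ y ∈ (t.erase p).erase q, wz y = w y := by
    intro y hy
    have hyt : y ∈ t := Finset.mem_of_mem_erase (Finset.mem_of_mem_erase hy)
    exact hz4 y (fun h => hz (h ▸ hyt)) (Finset.ne_of_mem_erase (Finset.mem_of_mem_erase hy))
      (Finset.ne_of_mem_erase hy)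
  have a1 : (∑ y ∈ t.erase p, w y) + w p = 0 := by rw [Finset.sum_erase_add t w hp]; exact hsum
  have a2 : (∑ y ∈ (t.erase p).erase q, w y) + w q = ∑ y ∈ t.erase p, w y :=
    Finset.sum_erase_add _ w hq'
  have b1 : (∑ y ∈ t.erase p, w y • y) + w p • p = 0 := by
    rw [Finset.sum_erase_add t _ hp]; exact hvec
  have b2 : (∑ y ∈ (t.erase p).erase q, w y • y) + w q • q = ∑ y ∈ t.erase p, w y • y :=
    Finset.sum_erase_add _ _ hq'
  refine ⟨⟨?_, ?_, z, Finset.mem_insert_self _ _, by rw [hz1]; positivity⟩, ?_, ?_⟩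
  · rw [Finset.sum_insert hzne, hz1, ← Finset.sum_erase_add _ wz hq', hz3,
      Finset.sum_congr rfl hdd]
    linarith
  · have hdd' : ∀ y ∈ (t.erase p).erase q, wz y • y = w y • y := by
      intro y hy; rw [hdd y hy]
    rw [Finset.sum_insert hzne, ← Finset.sum_erase_add _ (fun y => wz y • y) hq']
    rw [Finset.sum_congr rfl hdd', hz3, hz1, zero_smul, add_zero]
    linear_combination (norm := module) hzv + b1 + b2
  · have hpos : (0:ℝ) < w p + w q := by positivity
    ext y
    simp only [Finset.mem_filter, Finset.mem_insert, Finset.mem_erase]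
    by_cases hyz : y = z
    · subst hyz
      simp [hz1, hpos]
    by_cases hyp : y = p
    · subst hyp
      simp [hz2, Ne.symm hzp]
    by_cases hyq : y = q
    · subst hyq
      simp [hz3, Ne.symm hzq, hyp]
    · rw [hz4 y hyz hyp hyq]
      simp only [hyz, hyp, hyq, false_or, ne_eq, not_false_iff]
      tauto
  · have hpos : (0:ℝ) < w p + w q := by positivity
    ext y
    simp only [Finset.mem_filter, Finset.mem_insert, Finset.mem_erase]
    by_cases hyz : y = z
    · subst hyz
      simp [hz1, hz, not_lt.2 hpos.le]
    by_cases hyp : y = p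
    · subst hyp
      simp [Ne.symm hzp, not_lt.2 hwp.le]
    by_cases hyq : y = q
    · subst hyq
      simp [hz3, not_lt.2 hwq.le]
    · rw [hz4 y hyz hyp hyq]
      simp only [hyz, hyp, hyq, false_or, ne_eq, not_false_iff]
      tauto

end ValAux

namespace ValAux

theorem main_aux {N n : ℕ} (μ₁ μ₂ : Set (Euc N) → ℝ)
    (h₁ : IsValuation (polytopeClass N n) μ₁) (h₂ : IsValuation (polytopeClass N n) μ₂)
    (hagree : ∀ A ∈ simplexClass N n, μ₁ A = μ₂ A) (Φ : ℕ) :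
    ∀ t : Finset (Euc N), t.Nonempty → t.card * t.card + cM t ≤ Φ →
      sdim (convexHull ℝ (t : Set (Euc N))) ≤ n →
      μ₁ (convexHull ℝ (t : Set (Euc N))) = μ₂ (convexHull ℝ (t : Set (Euc N))) := by
  induction Φ using Nat.strong_induction_on with
  | _ Φ ih =>
  intro t ht hΦ hdim
  by_cases hdep : ∃ w, IsDep t w
  swap
  · -- no affine dependence : the hull is a simplex
    obtain ⟨hsimp, hsd⟩ := exists_simplex_of_no_dep ht hdep
    rw [hsd] at hdim
    exact hagree _ (Or.inr ⟨t.card - 1, hdim, hsimp⟩)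
  -- there is a dependence; pick one of minimal class size, oriented so that the
  -- positive class is the smaller one
  have hS : {j | ∃ w, IsDep t w ∧ mcl t w = j}.Nonempty := by
    obtain ⟨w, hw⟩ := hdep
    exact ⟨mcl t w, w, hw, rfl⟩
  obtain ⟨w₀, hw₀, hm₀⟩ := Nat.sInf_mem hS
  obtain ⟨w, hw, hwpos, hwneg⟩ : ∃ w, IsDep t w ∧
      (t.filter fun y => 0 < w y).card = cM t ∧ cM t ≤ (t.filter fun y => w y < 0).card := by
    rcases le_total (t.filter fun y => 0 < w₀ y).card (t.filter fun y => w₀ y < 0).card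
      with h | h
    · refine ⟨w₀, hw₀, ?_, ?_⟩
      · rw [show cM t = mcl t w₀ from hm₀.symm, mcl, min_eq_left h]
      · rw [show cM t = mcl t w₀ from hm₀.symm, mcl]
        exact min_le_right _ _
    · have e1 : (t.filter fun y => 0 < -w₀ y) = t.filter fun y => w₀ y < 0 :=
        Finset.filter_congr (fun y _ => by simp [neg_pos])
      have e2 : (t.filter fun y => -w₀ y < 0) = t.filter fun y => 0 < w₀ y :=
        Finset.filter_congr (fun y _ => by simp)
      refine ⟨fun y => - w₀ y, hw₀.neg, ?_, ?_⟩
      · rw [e1, show cM t = mcl t w₀ from hm₀.symm, mcl, min_eq_right h]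
      · rw [e2, show cM t = mcl t w₀ from hm₀.symm, mcl]
        exact min_le_left _ _
  have hc1 : 1 ≤ cM t := one_le_cM hdep
  rcases eq_or_lt_of_le hc1 with hc | hc
  · -- minimal class size 1 : there is a redundant point
    obtain ⟨u, hu_eq⟩ := Finset.card_eq_one.1 (by rw [hwpos, ← hc])
    have hu_mem : u ∈ t.filter fun y => 0 < w y := by
      rw [hu_eq]; exact Finset.mem_singleton_self u
    have hut : u ∈ t := (Finset.mem_filter.1 hu_mem).1
    have hwu : 0 < w u := (Finset.mem_filter.1 hu_mem).2
    have hle : ∀ y ∈ t, y ≠ u → w y ≤ 0 := by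
      intro y hy hne
      by_contra h
      have : y ∈ t.filter fun y => 0 < w y := Finset.mem_filter.2 ⟨hy, lt_of_not_ge h⟩
      rw [hu_eq, Finset.mem_singleton] at this
      exact hne this
    have heq := hull_erase_of_redundant hut (redundant_of_w hut hw.1 hw.2.1 hwu hle)
    obtain ⟨b, hb⟩ := hw.neg_nonempty
    have hbt : b ∈ t := (Finset.mem_filter.1 hb).1
    have hbw : w b < 0 := (Finset.mem_filter.1 hb).2
    have hbu : b ≠ u := fun h => absurd (h ▸ hwu) (not_lt.2 hbw.le)
    have herased_ne : (t.erase u).Nonempty := ⟨b, Finset.mem_erase.2 ⟨hbu, hbt⟩⟩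
    rw [heq]
    refine ih ((t.erase u).card * (t.erase u).card + cM (t.erase u)) ?_ _ herased_ne le_rfl ?_
    · have hcard : (t.erase u).card = t.card - 1 := Finset.card_erase_of_mem hut
      have h2 : cM (t.erase u) ≤ (t.erase u).card := cM_le_card _
      obtain ⟨k, hk⟩ : ∃ k, t.card = k + 1 :=
        ⟨t.card - 1, (Nat.succ_pred_eq_of_pos (Finset.card_pos.2 ht)).symm⟩
      have hcard' : (t.erase u).card = k := by omega
      rw [hcard'] at h2 ⊢
      rw [hk] at hΦ
      nlinarith [h2, hΦ, hc1]
    · rw [← heq]; exact hdim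
  · -- minimal class size ≥ 2 : split two points of the positive class
    obtain ⟨u, hu, v, hv, huv⟩ := Finset.one_lt_card.1 (by rw [hwpos]; exact hc)
    have hut : u ∈ t := (Finset.mem_filter.1 hu).1
    have hwu : 0 < w u := (Finset.mem_filter.1 hu).2
    have hvt : v ∈ t := (Finset.mem_filter.1 hv).1
    have hwv : 0 < w v := (Finset.mem_filter.1 hv).2
    have hs : 0 < w u + w v := add_pos hwu hwv
    set γ : ℝ := w v / (w u + w v) with hγ
    have hγ0 : 0 < γ := div_pos hwv hs
    have hγ1 : γ < 1 := by rw [hγ, div_lt_one hs]; linarith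
    set z : Euc N := (1 - γ) • u + γ • v with hzdef
    have e1 : (w u + w v) * γ = w v := by
      rw [hγ]; field_simp
    have e2 : (w u + w v) * (1 - γ) = w u := by
      have h' : (w u + w v) * (1 - γ) = (w u + w v) - (w u + w v) * γ := by ring
      rw [h', e1]; ring
    have hzv : (w u + w v) • z = w u • u + w v • v := by
      rw [hzdef, smul_add, smul_smul, smul_smul, e1, e2]
    -- z is not a point of t, else there would be a dependence of class size 1
    have hzu : z ≠ u := by
      intro h
      have h2 : γ • v = γ • u := by
        have h3 := h.symm
        rw [hzdef] at h3
        linear_combination (norm := module) -h3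
      exact huv (smul_right_injective (Euc N) hγ0.ne' h2).symm
    have hzv' : z ≠ v := by
      intro h
      have h2 : (1 - γ) • u = (1 - γ) • v := by
        have h3 := h.symm
        rw [hzdef] at h3
        linear_combination (norm := module) -h3
      exact huv (smul_right_injective (Euc N) (by linarith : (1:ℝ) - γ ≠ 0) h2)
    have hz : z ∉ t := by
      intro hzt
      set d : Euc N → ℝ := fun y => if y = z then -1 else if y = u then 1 - γ else
        if y = v then γ else 0 with hd
      have hdz : d z = -1 := by simp [hd]
      have hdu : d u = 1 - γ := by simp [hd, Ne.symm hzu]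
      have hdv : d v = γ := by simp [hd, Ne.symm hzv', Ne.symm huv]
      have hd0 : ∀ y, y ≠ z → y ≠ u → y ≠ v → d y = 0 := by
        intro y h1 h2 h3; simp [hd, h1, h2, h3]
      have hu' : u ∈ t.erase z := Finset.mem_erase.2 ⟨Ne.symm hzu, hut⟩
      have hv' : v ∈ (t.erase z).erase u := Finset.mem_erase.2 ⟨Ne.symm huv,
        Finset.mem_erase.2 ⟨Ne.symm hzv', hvt⟩⟩
      have hdd0 : ∀ y ∈ ((t.erase z).erase u).erase v, d y = 0 := by
        intro y hy
        have hyv : y ≠ v := Finset.ne_of_mem_erase hy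
        have hyu : y ≠ u := Finset.ne_of_mem_erase (Finset.mem_of_mem_erase hy)
        have hyz : y ≠ z := Finset.ne_of_mem_erase
          (Finset.mem_of_mem_erase (Finset.mem_of_mem_erase hy))
        exact hd0 y hyz hyu hyv
      have hsum : (∑ y ∈ t, d y) = 0 := by
        rw [← Finset.sum_erase_add t d hzt, ← Finset.sum_erase_add _ d hu',
          ← Finset.sum_erase_add _ d hv', hdz, hdu, hdv,
          Finset.sum_eq_zero hdd0]
        ring
      have hvec : (∑ y ∈ t, d y • y) = (0 : Euc N) := by
        rw [← Finset.sum_erase_add t (fun y => d y • y) hzt,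
          ← Finset.sum_erase_add _ (fun y => d y • y) hu',
          ← Finset.sum_erase_add _ (fun y => d y • y) hv']
        rw [hdz, hdu, hdv,
          Finset.sum_eq_zero (fun y hy => by rw [hdd0 y hy, zero_smul]), hzdef]
        module
      have hdep' : IsDep t d := ⟨hsum, hvec, z, hzt, by rw [hdz]; norm_num⟩
      have hnegd : t.filter (fun y => d y < 0) = {z} := by
        ext y
        simp only [Finset.mem_filter, Finset.mem_singleton]
        constructor
        · rintro ⟨hyt, hylt⟩
          by_contra hyz
          rcases eq_or_ne y u with rfl | hyu
          · rw [hdu] at hylt; linarith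
          rcases eq_or_ne y v with rfl | hyv
          · rw [hdv] at hylt; linarith
          · rw [hd0 y hyz hyu hyv] at hylt; linarith
        · rintro rfl
          exact ⟨hzt, by rw [hdz]; norm_num⟩
      have hmcl : mcl t d ≤ 1 := by
        rw [mcl]
        refine le_trans (min_le_right _ _) ?_
        rw [hnegd, Finset.card_singleton]
      have : cM t ≤ mcl t d := Nat.sInf_le ⟨d, hdep', rfl⟩
      omega
    have huz : u ≠ z := Ne.symm hzu
    have hvz2 : v ≠ z := Ne.symm hzv'
    -- the transferred dependence
    set wz : Euc N → ℝ := fun y => if y = z then w u + w v else if y = u then 0 else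
      if y = v then 0 else w y with hwz
    have f1 : wz z = w u + w v := by simp [hwz]
    have f2 : wz u = 0 := by simp [hwz, huz]
    have f3 : wz v = 0 := by simp [hwz, hvz2, Ne.symm huv]
    have f4 : ∀ y, y ≠ z → y ≠ u → y ≠ v → wz y = w y := by
      intro y hy1 hy2 hy3; simp [hwz, hy1, hy2, hy3]
    have hd₁ := dep_transfer hut hvt huv hwu hwv hw.1 hw.2.1 hz hzv f1 f2 f3 f4
    have hzv2 : (w v + w u) • z = w v • v + w u • u := by
      linear_combination (norm := module) hzv
    have f1' : wz z = w v + w u := by rw [f1]; ring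
    have hd₂ := dep_transfer hvt hut huv.symm hwv hwu hw.1 hw.2.1 hz hzv2 f1' f3 f2
      (fun y hy1 hy2 hy3 => f4 y hy1 hy3 hy2)
    -- cardinalities and measures
    have hm2 : 2 ≤ t.card := Finset.one_lt_card.2 ⟨u, hut, v, hvt, huv⟩
    have hzeru : z ∉ t.erase u := fun h => hz (Finset.mem_of_mem_erase h)
    have hzerv : z ∉ t.erase v := fun h => hz (Finset.mem_of_mem_erase h)
    have hzerd : z ∉ (t.erase u).erase v :=
      fun h => hz (Finset.mem_of_mem_erase (Finset.mem_of_mem_erase h))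
    have hvust : v ∈ t.erase u := Finset.mem_erase.2 ⟨huv.symm, hvt⟩
    have hcard₁ : (insert z (t.erase u)).card = t.card := by
      rw [Finset.card_insert_of_notMem hzeru, Finset.card_erase_of_mem hut]
      omega
    have hcard₂ : (insert z (t.erase v)).card = t.card := by
      rw [Finset.card_insert_of_notMem hzerv, Finset.card_erase_of_mem hvt]
      omega
    have hcard₀ : (insert z ((t.erase u).erase v)).card = t.card - 1 := by
      rw [Finset.card_insert_of_notMem hzerd, Finset.card_erase_of_mem hvust,
        Finset.card_erase_of_mem hut]
      omega
    -- the positive class of wz on each piece has size cM t - 1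
    have hposfil : ∀ pq : Finset (Euc N),
        pq = insert z (((t.filter fun y => 0 < w y).erase u).erase v) ∨
        pq = insert z (((t.filter fun y => 0 < w y).erase v).erase u) →
        pq.card = cM t - 1 := by
      rintro pq (rfl | rfl)
      · have hvin : v ∈ (t.filter fun y => 0 < w y).erase u := Finset.mem_erase.2 ⟨huv.symm, hv⟩
        have hzout : z ∉ ((t.filter fun y => 0 < w y).erase u).erase v := by
          intro h
          exact hz (Finset.mem_filter.1
            (Finset.mem_of_mem_erase (Finset.mem_of_mem_erase h))).1
        rw [Finset.card_insert_of_notMem hzout, Finset.card_erase_of_mem hvin,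
          Finset.card_erase_of_mem hu, hwpos]
        omega
      · have huin : u ∈ (t.filter fun y => 0 < w y).erase v := Finset.mem_erase.2 ⟨huv, hu⟩
        have hzout : z ∉ ((t.filter fun y => 0 < w y).erase v).erase u := by
          intro h
          exact hz (Finset.mem_filter.1
            (Finset.mem_of_mem_erase (Finset.mem_of_mem_erase h))).1
        rw [Finset.card_insert_of_notMem hzout, Finset.card_erase_of_mem huin,
          Finset.card_erase_of_mem hv, hwpos]
        omega
    have hcM₁ : cM (insert z (t.erase u)) ≤ cM t - 1 := by
      have hval : mcl (insert z (t.erase u)) wz = cM t - 1 := by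
        rw [mcl, hd₁.2.1, hd₁.2.2, hposfil _ (Or.inl rfl)]
        exact min_eq_left (by omega)
      exact Nat.sInf_le ⟨wz, hd₁.1, hval⟩
    have hcM₂ : cM (insert z (t.erase v)) ≤ cM t - 1 := by
      have hval : mcl (insert z (t.erase v)) wz = cM t - 1 := by
        rw [mcl, hd₂.2.1, hd₂.2.2, hposfil _ (Or.inr rfl)]
        exact min_eq_left (by omega)
      exact Nat.sInf_le ⟨wz, hd₂.1, hval⟩
    -- the two halves and their intersection
    have L2 := hull_split_union hut hvt huv hγ0 hγ1 hzdef hz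
    have L3 := hull_split_inter hut hvt huv hγ0 hγ1 hzdef hz
    have hne₁ : (insert z (t.erase u)).Nonempty := ⟨z, Finset.mem_insert_self _ _⟩
    have hne₂ : (insert z (t.erase v)).Nonempty := ⟨z, Finset.mem_insert_self _ _⟩
    have hne₀ : (insert z ((t.erase u).erase v)).Nonempty := ⟨z, Finset.mem_insert_self _ _⟩
    have hsub₁ : convexHull ℝ ((insert z (t.erase u) : Finset (Euc N)) : Set (Euc N)) ⊆
        convexHull ℝ (t : Set (Euc N)) := by rw [L2]; exact subset_union_left
    have hsub₂ : convexHull ℝ ((insert z (t.erase v) : Finset (Euc N)) : Set (Euc N)) ⊆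
        convexHull ℝ (t : Set (Euc N)) := by rw [L2]; exact subset_union_right
    have hsub₀ : convexHull ℝ ((insert z ((t.erase u).erase v) : Finset (Euc N)) : Set (Euc N)) ⊆
        convexHull ℝ (t : Set (Euc N)) := by
      rw [← L3]
      exact (Set.inter_subset_left).trans hsub₁
    have hdim₁ := le_trans (sdim_mono hsub₁) hdim
    have hdim₂ := le_trans (sdim_mono hsub₂) hdim
    have hdim₀ := le_trans (sdim_mono hsub₀) hdim
    have hmem₁ : convexHull ℝ ((insert z (t.erase u) : Finset (Euc N)) : Set (Euc N)) ∈
        polytopeClass N n := Or.inr ⟨⟨_, hne₁, rfl⟩, hdim₁⟩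
    have hmem₂ : convexHull ℝ ((insert z (t.erase v) : Finset (Euc N)) : Set (Euc N)) ∈
        polytopeClass N n := Or.inr ⟨⟨_, hne₂, rfl⟩, hdim₂⟩
    have hmemU : convexHull ℝ ((insert z (t.erase u) : Finset (Euc N)) : Set (Euc N)) ∪
        convexHull ℝ ((insert z (t.erase v) : Finset (Euc N)) : Set (Euc N)) ∈
        polytopeClass N n := by
      rw [← L2]; exact Or.inr ⟨⟨t, ht, rfl⟩, hdim⟩
    have hmemI : convexHull ℝ ((insert z (t.erase u) : Finset (Euc N)) : Set (Euc N)) ∩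
        convexHull ℝ ((insert z (t.erase v) : Finset (Euc N)) : Set (Euc N)) ∈
        polytopeClass N n := by
      rw [L3]; exact Or.inr ⟨⟨_, hne₀, rfl⟩, hdim₀⟩
    have q₁ := h₁.2 _ hmem₁ _ hmem₂ hmemU hmemI
    have q₂ := h₂.2 _ hmem₁ _ hmem₂ hmemU hmemI
    rw [← L2, L3] at q₁ q₂
    -- apply the induction hypothesis to the three smaller hulls
    have IH₁ := ih ((insert z (t.erase u)).card * (insert z (t.erase u)).card +
        cM (insert z (t.erase u)))
      (by
        rw [hcard₁]
        have : cM (insert z (t.erase u)) < cM t := by omega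
        have h' := Nat.add_lt_add_left this (t.card * t.card)
        omega)
      _ hne₁ le_rfl hdim₁
    have IH₂ := ih ((insert z (t.erase v)).card * (insert z (t.erase v)).card +
        cM (insert z (t.erase v)))
      (by
        rw [hcard₂]
        have : cM (insert z (t.erase v)) < cM t := by omega
        have h' := Nat.add_lt_add_left this (t.card * t.card)
        omega)
      _ hne₂ le_rfl hdim₂
    have IH₀ := ih ((insert z ((t.erase u).erase v)).card *
        (insert z ((t.erase u).erase v)).card + cM (insert z ((t.erase u).erase v)))
      (by
        have h2 := cM_le_card (insert z ((t.erase u).erase v))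
        have hΦ' : t.card * t.card ≤ Φ := le_trans (Nat.le_add_right _ _) hΦ
        rw [hcard₀] at h2 ⊢
        have key : (t.card - 1) * (t.card - 1) + (t.card - 1) < t.card * t.card := by
          obtain ⟨k, hk⟩ : ∃ k, t.card = k + 2 := ⟨t.card - 2, by omega⟩
          rw [hk]
          have hq : k + 2 - 1 = k + 1 := by omega
          rw [hq]
          have e1 : (k + 1) * (k + 1) + (k + 1) = k * k + (3 * k + 2) := by ring
          have e2 : (k + 2) * (k + 2) = k * k + (4 * k + 4) := by ring
          rw [e1, e2]
          exact Nat.add_lt_add_left (by omega) _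
        have h3 := Nat.add_le_add_left h2 ((t.card - 1) * (t.card - 1))
        exact lt_of_le_of_lt h3 (lt_of_lt_of_le key hΦ'))
      _ hne₀ le_rfl hdim₀
    linarith [q₁, q₂, IH₁, IH₂, IH₀]

end ValAux

/-- two valuations on polytopes of dimension at most `n` that agree on all
simplices of dimension at most `n` agree on all such polytopes. -/
theorem valuations_agree_on_polytopes {N n : ℕ} (μ₁ μ₂ : Set (Euc N) → ℝ)
    (h₁ : IsValuation (polytopeClass N n) μ₁) (h₂ : IsValuation (polytopeClass N n) μ₂)
    (hagree : ∀ A ∈ simplexClass N n, μ₁ A = μ₂ A) :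
    ∀ A ∈ polytopeClass N n, μ₁ A = μ₂ A := by
  intro A hA
  rcases hA with h | ⟨⟨t, ht, h⟩, hdim⟩
  · rw [h]
    exact hagree ∅ (Or.inl rfl)
  · subst h
    exact ValAux.main_aux μ₁ μ₂ h₁ h₂ hagree _ t ht le_rfl hdim
end
end

section
/- If an n-simplex T in R^N is dissected by a hyperplane H containing an (n−2)-dimensional face of T and meeting the interior of T, then T ∩ H⁺ and T ∩ H⁻ are both n-simplices, where H⁺ and H⁻ are the two closed halfspaces bounded by H. -/
open Set MeasureTheory
open scoped Classical
noncomputable section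

/-- From a point of the intrinsic interior of `T` one can move slightly away from any
point `y` of `T` while staying inside `T`. -/
private lemma extend_mem_of_intrinsicInterior {N : ℕ} {T : Set (Euc N)} {x y : Euc N}
    (hx : x ∈ intrinsicInterior ℝ T) (hy : y ∈ T) :
    ∃ ε : ℝ, 0 < ε ∧ x + ε • (x - y) ∈ T := by
  obtain ⟨x', hx', hxx⟩ := hx
  have hxs : x ∈ affineSpan ℝ T := hxx ▸ x'.2
  have hys : y ∈ affineSpan ℝ T := subset_affineSpan ℝ T hy
  have hmem : ∀ t : ℝ, x + t • (x - y) ∈ affineSpan ℝ T := by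
    intro t
    have h := (affineSpan ℝ T).smul_vsub_vadd_mem t hxs hys hxs
    simpa [vsub_eq_sub, vadd_eq_add, add_comm] using h
  let g : ℝ → affineSpan ℝ T := fun t => ⟨x + t • (x - y), hmem t⟩
  have hg : Continuous g := by
    apply Continuous.subtype_mk
    fun_prop
  have h0 : g 0 ∈ interior ((↑) ⁻¹' T : Set (affineSpan ℝ T)) := by
    have hg0 : g 0 = x' := Subtype.ext (by simp [g, ← hxx])
    rw [hg0]; exact hx'
  have hnhds : g ⁻¹' interior ((↑) ⁻¹' T : Set (affineSpan ℝ T)) ∈ nhds (0 : ℝ) :=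
    hg.continuousAt.preimage_mem_nhds (isOpen_interior.mem_nhds h0)
  obtain ⟨ε, hε, hball⟩ := Metric.mem_nhds_iff.mp hnhds
  refine ⟨ε / 2, by linarith, ?_⟩
  have hb : (ε / 2 : ℝ) ∈ Metric.ball (0 : ℝ) ε := by
    rw [Metric.mem_ball, Real.dist_eq, sub_zero, abs_of_pos (by linarith)]
    linarith
  have := interior_subset (hball hb)
  exact this

private lemma split3 {M : Type*} [AddCommMonoid M] {n : ℕ} {m j : Fin (n + 1)} (hmj : m ≠ j)
    (g : Fin (n + 1) → M) :
    ∑ k, g k = ∑ k ∈ (Finset.univ.erase j).erase m, g k + g m + g j := by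
  rw [Finset.sum_erase_add _ _ (Finset.mem_erase.mpr ⟨hmj, Finset.mem_univ m⟩),
    Finset.sum_erase_add _ _ (Finset.mem_univ j)]

/-- One half of the dissection: the `≤ c` side is an `n`-simplex. -/
private lemma side_simplex {N n : ℕ}
    (v : Fin (n + 1) → Euc N) (hv : AffineIndependent ℝ v)
    (f : Euc N →ₗ[ℝ] ℝ) (c : ℝ)
    (s : Finset (Fin (n + 1))) (hs : s.card = n - 1) (hface : ∀ i ∈ s, f (v i) = c)
    (hint : ∃ x ∈ intrinsicInterior ℝ (convexHull ℝ (Set.range v)), f x = c) :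
    IsSimplex n (convexHull ℝ (Set.range v) ∩ {x | f x ≤ c}) := by
  by_cases hall : ∀ k, f (v k) ≤ c
  · have hsub : convexHull ℝ (Set.range v) ⊆ {x | f x ≤ c} :=
      convexHull_min (by rintro _ ⟨k, rfl⟩; exact hall k) (convex_halfSpace_le f.isLinear c)
    rw [Set.inter_eq_left.mpr hsub]
    exact ⟨v, hv, rfl⟩
  · push_neg at hall
    obtain ⟨j, hj⟩ := hall
    obtain ⟨x, hxint, hxc⟩ := hint
    obtain ⟨ε, hε, hz⟩ := extend_mem_of_intrinsicInterior hxint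
      (subset_convexHull ℝ _ (Set.mem_range_self j))
    have hfz : f (x + ε • (x - v j)) < c := by
      rw [map_add, _root_.map_smul, map_sub, smul_eq_mul, hxc]
      nlinarith
    have hmex : ∃ m, f (v m) < c := by
      by_contra h
      push_neg at h
      have hsub : convexHull ℝ (Set.range v) ⊆ {x | c ≤ f x} :=
        convexHull_min (by rintro _ ⟨k, rfl⟩; exact h k) (convex_halfSpace_ge f.isLinear c)
      exact absurd (hsub hz) (by simpa using hfz)
    obtain ⟨m, hm⟩ := hmex
    clear hfz hz hε hxc hxint
    have hmj : m ≠ j := by intro h; rw [h] at hm; linarith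
    set a : ℝ := c - f (v m) with hadef
    set b : ℝ := f (v j) - c with hbdef
    have ha : 0 < a := by rw [hadef]; linarith
    have hb : 0 < b := by rw [hbdef]; linarith
    have hfm : f (v m) = c - a := by rw [hadef]; ring
    have hfj : f (v j) = c + b := by rw [hbdef]; ring
    have hab : a + b ≠ 0 := by positivity
    have hane : a ≠ 0 := ne_of_gt ha
    have hms : m ∉ s := by intro h; have := hface m h; linarith
    have hjs : j ∉ s := by intro h; have := hface j h; linarith
    have hcompl : ({m, j} : Finset (Fin (n + 1))) = sᶜ := by
      apply Finset.eq_of_subset_of_card_le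
      · intro k hk
        rw [Finset.mem_insert, Finset.mem_singleton] at hk
        rcases hk with rfl | rfl
        · exact Finset.mem_compl.mpr hms
        · exact Finset.mem_compl.mpr hjs
      · rw [Finset.card_compl, hs,
          Finset.card_insert_of_notMem (Finset.notMem_singleton.mpr hmj),
          Finset.card_singleton]
        simp only [Fintype.card_fin]
        omega
    have hks : ∀ k : Fin (n + 1), k ≠ m → k ≠ j → f (v k) = c := by
      intro k hkm hkj
      apply hface
      by_contra h
      have hk : k ∈ sᶜ := Finset.mem_compl.mpr h
      rw [← hcompl, Finset.mem_insert, Finset.mem_singleton] at hk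
      tauto
    have ht0 : a / (a + b) ≠ 0 := div_ne_zero hane hab
    set wt : Fin (n + 1) → ℝˣ :=
      fun k => if k = j then Units.mk0 (a / (a + b)) ht0 else 1 with hwt
    set u : Fin (n + 1) → Euc N :=
      fun k => AffineMap.lineMap (v m) (v k) ((wt k : ℝ)) with hudef
    have hu : AffineIndependent ℝ u := hv.units_lineMap m wt
    have huk : ∀ k, k ≠ j → u k = v k := by
      intro k hk
      simp [hudef, hwt, hk]
    have huj : u j = (1 - a / (a + b)) • v m + (a / (a + b)) • v j := by
      rw [hudef]
      simp only [hwt, if_pos rfl, Units.val_mk0]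
      rw [AffineMap.lineMap_apply_module]
    have hfuj : f (u j) = c := by
      rw [huj, map_add, _root_.map_smul, _root_.map_smul, smul_eq_mul, smul_eq_mul, hfm, hfj]
      field_simp
      ring
    have hset : convexHull ℝ (Set.range v) ∩ {x | f x ≤ c} = convexHull ℝ (Set.range u) := by
      apply Set.Subset.antisymm
      · rintro x' ⟨hx'T, hx'f⟩
        have hx'c : f x' ≤ c := hx'f
        rw [convexHull_range_eq_exists_affineCombination] at hx'T
        obtain ⟨t, w, hw0, hw1, hxw⟩ := hx'T
        set W : Fin (n + 1) → ℝ := Set.indicator ↑t w with hW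
        have hW0 : ∀ k, 0 ≤ W k := by
          intro k
          rw [hW]
          exact Set.indicator_nonneg (fun i hi => hw0 i (Finset.mem_coe.mp hi)) k
        have hW1 : ∑ k, W k = 1 := by
          rw [hW, Finset.sum_indicator_subset w (Finset.subset_univ t)]
          exact hw1
        have hx'W : x' = ∑ k, W k • v k := by
          rw [← hxw, Finset.affineCombination_indicator_subset w v (Finset.subset_univ t),
            Finset.affineCombination_eq_linear_combination _ _ _ hW1]
        have hrW : ∑ k ∈ (Finset.univ.erase j).erase m, W k = 1 - W m - W j := by
          have h1 := split3 hmj W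
          rw [hW1] at h1
          linarith
        have hfx' : f x' = c - W m * a + W j * b := by
          have hfs : f x' = ∑ k, W k * f (v k) := by
            rw [hx'W, map_sum]
            simp only [_root_.map_smul, smul_eq_mul]
          have e := split3 hmj (fun k => W k * f (v k))
          have erest : ∑ k ∈ (Finset.univ.erase j).erase m, W k * f (v k)
              = (∑ k ∈ (Finset.univ.erase j).erase m, W k) * c := by
            rw [Finset.sum_mul]
            refine Finset.sum_congr rfl fun k hk => ?_
            have hkm := (Finset.mem_erase.mp hk).1
            have hkj := (Finset.mem_erase.mp (Finset.mem_erase.mp hk).2).1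
            rw [hks k hkm hkj]
          rw [hfs, e, erest, hrW, hfm, hfj]
          ring
        have key : W j * b ≤ W m * a := by linarith
        set W' : Fin (n + 1) → ℝ := fun k =>
          if k = j then W j * ((a + b) / a)
          else if k = m then W m - W j * (b / a) else W k with hW'
        have hW'j : W' j = W j * ((a + b) / a) := by rw [hW']; simp
        have hW'm : W' m = W m - W j * (b / a) := by rw [hW']; simp [hmj]
        have hW'rest : ∀ k, k ≠ m → k ≠ j → W' k = W k := by
          intro k h1 h2
          rw [hW']
          simp [h1, h2]
        have hW'0 : ∀ k, 0 ≤ W' k := by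
          intro k
          by_cases h2 : k = j
          · rw [h2, hW'j]
            have : (0:ℝ) ≤ (a + b) / a := by positivity
            exact mul_nonneg (hW0 j) this
          · by_cases h1 : k = m
            · rw [h1, hW'm, sub_nonneg, ← mul_div_assoc, div_le_iff₀ ha]
              exact key
            · rw [hW'rest k h1 h2]; exact hW0 k
        have hrest2 : ∑ k ∈ (Finset.univ.erase j).erase m, W' k
            = ∑ k ∈ (Finset.univ.erase j).erase m, W k := by
          refine Finset.sum_congr rfl fun k hk => ?_
          have hkm := (Finset.mem_erase.mp hk).1
          have hkj := (Finset.mem_erase.mp (Finset.mem_erase.mp hk).2).1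
          exact hW'rest k hkm hkj
        have hW'1 : ∑ k, W' k = 1 := by
          rw [split3 hmj W', hrest2, hrW, hW'm, hW'j]
          field_simp
          ring
        have hvertex : W' m • u m + W' j • u j = W m • v m + W j • v j := by
          rw [huk m hmj, huj, hW'm, hW'j]
          match_scalars
          · field_simp
            ring
          · field_simp
        have hrest3 : ∑ k ∈ (Finset.univ.erase j).erase m, W' k • u k
            = ∑ k ∈ (Finset.univ.erase j).erase m, W k • v k := by
          refine Finset.sum_congr rfl fun k hk => ?_
          have hkm := (Finset.mem_erase.mp hk).1
          have hkj := (Finset.mem_erase.mp (Finset.mem_erase.mp hk).2).1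
          rw [hW'rest k hkm hkj, huk k hkj]
        have hxu : x' = ∑ k, W' k • u k := by
          rw [hx'W, split3 hmj (fun k => W k • v k), split3 hmj (fun k => W' k • u k)]
          rw [hrest3, add_assoc, add_assoc, hvertex]
        rw [hxu]
        exact (convex_convexHull ℝ (Set.range u)).sum_mem (fun k _ => hW'0 k) hW'1
          (fun k _ => subset_convexHull ℝ _ (Set.mem_range_self k))
      · apply convexHull_min ?_
          ((convex_convexHull ℝ (Set.range v)).inter (convex_halfSpace_le f.isLinear c))
        rintro _ ⟨k, rfl⟩
        by_cases hk : k = j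
        · subst hk
          constructor
          · have h01 : (0:ℝ) ≤ a / (a + b) := by positivity
            have h02 : (0:ℝ) ≤ 1 - a / (a + b) := by
              rw [sub_nonneg, div_le_one (by positivity)]
              linarith
            rw [huj]
            exact (convex_convexHull ℝ (Set.range v))
              (subset_convexHull ℝ _ (Set.mem_range_self m))
              (subset_convexHull ℝ _ (Set.mem_range_self k)) h02 h01 (by ring)
          · exact le_of_eq hfuj
        · rw [huk k hk]
          refine ⟨subset_convexHull ℝ _ (Set.mem_range_self k), ?_⟩
          by_cases hk' : k = m
          · subst hk'; exact le_of_lt hm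
          · exact le_of_eq (hks k hk' hk)
    exact ⟨u, hu, hset⟩

/-- a hyperplane through an `(n-2)`-face of an `n`-simplex meeting its
relative interior dissects it into two `n`-simplices. -/
theorem hyperplane_dissects_simplex {N n : ℕ} (T : Set (Euc N))
    (v : Fin (n + 1) → Euc N) (hv : AffineIndependent ℝ v)
    (hT : T = convexHull ℝ (Set.range v))
    (f : Euc N →ₗ[ℝ] ℝ) (hf : f ≠ 0) (c : ℝ)
    (s : Finset (Fin (n + 1))) (hs : s.card = n - 1) (hface : ∀ i ∈ s, f (v i) = c)
    (hint : ∃ x ∈ intrinsicInterior ℝ T, f x = c) :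
    IsSimplex n (T ∩ {x | f x ≤ c}) ∧ IsSimplex n (T ∩ {x | c ≤ f x}) := by
  subst hT
  constructor
  · exact side_simplex v hv f c s hs hface hint
  · have h2 := side_simplex v hv (-f) (-c) s hs
      (by intro i hi; simp [hface i hi])
      (by obtain ⟨x, h1, hx2⟩ := hint; exact ⟨x, h1, by simp [hx2]⟩)
    have hEq : {x : Euc N | (-f) x ≤ -c} = {x : Euc N | c ≤ f x} := by
      ext x
      simp [neg_le_neg_iff]
    rwa [hEq] at h2
end
end

section
/- If S and T are n-simplices in R^N with disjoint interiors (relative to their common affine hull) such that S ∪ T is again an n-simplex, then S ∩ T is a common facet of S and T, and the affine hull of S ∩ T contains an (n−2)-dimensional face of S ∪ T. -/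
open Set MeasureTheory
open scoped Classical
noncomputable section

section Helpers

variable {N : ℕ}


lemma mem_convexHull_range_iff {ι : Type} [Fintype ι] (u : ι → Euc N) {x : Euc N} :
    x ∈ convexHull ℝ (Set.range u) ↔
      ∃ lam : ι → ℝ, (∀ i, 0 ≤ lam i) ∧ ∑ i, lam i = 1 ∧ ∑ i, lam i • u i = x := by
  rw [convexHull_range_eq_exists_affineCombination]
  constructor
  · rintro ⟨s, w, h0, h1, rfl⟩
    refine ⟨fun i => if i ∈ s then w i else 0, fun i => by dsimp only; split; exacts [h0 i ‹_›, le_refl 0], ?_, ?_⟩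
    · rw [Finset.sum_ite_mem, Finset.univ_inter]; exact h1
    · rw [Finset.affineCombination_eq_linear_combination s u w h1]
      simp only [ite_smul, zero_smul]
      rw [Finset.sum_ite_mem, Finset.univ_inter]
  · rintro ⟨lam, h0, h1, rfl⟩
    exact ⟨Finset.univ, lam, fun i _ => h0 i, h1,
      Finset.affineCombination_eq_linear_combination _ u lam h1⟩

lemma bary_unique {ι : Type} [Fintype ι] {u : ι → Euc N} (hu : AffineIndependent ℝ u)
    {w1 w2 : ι → ℝ} (h1 : ∑ i, w1 i = 1) (h2 : ∑ i, w2 i = 1)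
    (heq : ∑ i, w1 i • u i = ∑ i, w2 i • u i) : w1 = w2 := by
  refine (affineIndependent_iff_eq_of_fintype_affineCombination_eq ℝ u).1 hu w1 w2 h1 h2 ?_
  rw [Finset.affineCombination_eq_linear_combination _ u _ h1,
    Finset.affineCombination_eq_linear_combination _ u _ h2]
  exact heq

lemma vectorSpan_convexHull' (s : Set (Euc N)) :
    vectorSpan ℝ (convexHull ℝ s) = vectorSpan ℝ s := by
  rw [← direction_affineSpan, affineSpan_convexHull, direction_affineSpan]

lemma mem_intrinsicInterior_iff' {s : Set (Euc N)} {x : Euc N} :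
    x ∈ intrinsicInterior ℝ s ↔
      x ∈ s ∧ ∃ ε > 0, ∀ y ∈ (affineSpan ℝ s : Set (Euc N)), dist y x < ε → y ∈ s := by
  constructor
  · rintro ⟨y, hy, rfl⟩
    refine ⟨interior_subset (s := (Subtype.val ⁻¹' s : Set (affineSpan ℝ s))) hy, ?_⟩
    rw [mem_interior_iff_mem_nhds, Metric.mem_nhds_iff] at hy
    obtain ⟨ε, hε, hball⟩ := hy
    refine ⟨ε, hε, fun z hz hd => ?_⟩
    exact hball (show (⟨z, hz⟩ : affineSpan ℝ s) ∈ Metric.ball y ε by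
      rw [Metric.mem_ball, Subtype.dist_eq]; exact hd)
  · rintro ⟨hxs, ε, hε, h⟩
    refine ⟨⟨x, subset_affineSpan ℝ s hxs⟩, ?_, rfl⟩
    rw [mem_interior_iff_mem_nhds, Metric.mem_nhds_iff]
    refine ⟨ε, hε, fun z hz => ?_⟩
    rw [Metric.mem_ball, Subtype.dist_eq] at hz
    exact h z z.2 hz

lemma relint_segment {s : Set (Euc N)} (hs : Convex ℝ s) {x z : Euc N}
    (hx : x ∈ s) (hz : z ∈ intrinsicInterior ℝ s) {t : ℝ} (ht0 : 0 < t) (ht1 : t ≤ 1) :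
    x + t • (z - x) ∈ intrinsicInterior ℝ s := by
  rw [mem_intrinsicInterior_iff'] at hz ⊢
  obtain ⟨hzs, ε, hε, hball⟩ := hz
  have hw : x + t • (z - x) ∈ s := by
    have := hs hx hzs (by linarith : (0:ℝ) ≤ 1 - t) ht0.le (by ring)
    convert this using 1
    module
  refine ⟨hw, t * ε, by positivity, fun y hy hd => ?_⟩
  set w := x + t • (z - x) with hwdef
  have hxA : x ∈ (affineSpan ℝ s : Set (Euc N)) := subset_affineSpan ℝ s hx
  have hzA : z ∈ (affineSpan ℝ s : Set (Euc N)) := subset_affineSpan ℝ s hzs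
  have hwA : w ∈ (affineSpan ℝ s : Set (Euc N)) := by
    have := AffineSubspace.smul_vsub_vadd_mem (affineSpan ℝ s) t hzA hxA hxA
    simpa [w, vsub_eq_sub, vadd_eq_add, add_comm] using this
  set z' := z + t⁻¹ • (y - w) with hz'def
  have hz'A : z' ∈ (affineSpan ℝ s : Set (Euc N)) := by
    have := AffineSubspace.smul_vsub_vadd_mem (affineSpan ℝ s) t⁻¹ hy hwA hzA
    simpa [z', vsub_eq_sub, vadd_eq_add, add_comm] using this
  have hz's : z' ∈ s := by
    refine hball z' hz'A ?_
    have : z' - z = t⁻¹ • (y - w) := by simp [z']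
    rw [dist_eq_norm, this, norm_smul]
    rw [dist_eq_norm] at hd
    have : ‖y - w‖ < t * ε := hd
    calc ‖t⁻¹‖ * ‖y - w‖ < ‖t⁻¹‖ * (t * ε) := by
          apply mul_lt_mul_of_pos_left this
          simp [norm_pos_iff, ne_of_gt ht0]
      _ = ε := by rw [Real.norm_eq_abs, abs_of_pos (by positivity)]; field_simp
  have hy' : y = (1 - t) • x + t • z' := by
    rw [hz'def, hwdef]
    rw [smul_add, smul_smul, mul_inv_cancel₀ (ne_of_gt ht0), one_smul]
    module
  rw [hy']
  exact hs hx hz's (by linarith) ht0.le (by ring)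

lemma relint_convex {s : Set (Euc N)} (hs : Convex ℝ s) :
    Convex ℝ (intrinsicInterior ℝ s) := by
  intro z₁ hz₁ z₂ hz₂ a b ha hb hab
  rcases eq_or_lt_of_le hb with hb0 | hb0
  · have : a = 1 := by linarith
    simpa [← hb0, this] using hz₁
  · have h := relint_segment hs (intrinsicInterior_subset hz₁) hz₂ hb0 (by linarith)
    convert h using 1
    have : a = 1 - b := by linarith
    rw [this]; module

section Extreme

variable {n : ℕ} {u : Fin (n+1) → Euc N}

lemma sum_single_smul (s : ℝ) (k : Fin (n+1)) :
    ∑ l, (s * (if l = k then (1:ℝ) else 0)) • u l = s • u k := by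
  rw [Finset.sum_eq_single k]
  · simp
  · intro b _ hb; simp [hb]
  · simp

lemma sum_single (s : ℝ) (k : Fin (n+1)) :
    ∑ l, s * (if l = k then (1:ℝ) else 0) = s := by
  rw [Finset.sum_eq_single k] <;> simp +contextual

/-- barycentric coordinates of a point on the segment `[u i, u j]`. -/
def kap (i j : Fin (n+1)) (t : ℝ) : Fin (n+1) → ℝ :=
  fun l => (1-t) * (if l = i then 1 else 0) + t * (if l = j then 1 else 0)

lemma kap_sum {i j : Fin (n+1)} (t : ℝ) : ∑ l, kap i j t l = 1 := by
  unfold kap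
  rw [Finset.sum_add_distrib, sum_single, sum_single]; ring

lemma kap_smul_sum {i j : Fin (n+1)} (t : ℝ) :
    ∑ l, kap i j t l • u l = u i + t • (u j - u i) := by
  simp only [kap, add_smul, Finset.sum_add_distrib, sum_single_smul]
  module

lemma kap_nonneg {i j : Fin (n+1)} {t : ℝ} (h0 : 0 ≤ t) (h1 : t ≤ 1) (l : Fin (n+1)) :
    0 ≤ kap i j t l := by
  unfold kap
  have : (0:ℝ) ≤ 1 - t := by linarith
  positivity

lemma cross_mem_hull {i j : Fin (n+1)} {t : ℝ} (h0 : 0 ≤ t) (h1 : t ≤ 1) :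
    u i + t • (u j - u i) ∈ convexHull ℝ (Set.range u) :=
  (mem_convexHull_range_iff u).2 ⟨kap i j t, kap_nonneg h0 h1, kap_sum t, kap_smul_sum t⟩

lemma extreme_vertex (hu : AffineIndependent ℝ u)
    {S : Set (Euc N)} (hSsub : S ⊆ convexHull ℝ (Set.range u)) (k : Fin (n+1)) (hk : u k ∈ S) :
    u k ∈ S.extremePoints ℝ := by
  refine ⟨hk, fun x₁ hx₁ x₂ hx₂ hseg => ?_⟩
  obtain ⟨a, b, ha, hb, hab, habx⟩ := hseg
  obtain ⟨μ, hμ0, hμ1, hμx⟩ := (mem_convexHull_range_iff u).1 (hSsub hx₁)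
  obtain ⟨ν, hν0, hν1, hνx⟩ := (mem_convexHull_range_iff u).1 (hSsub hx₂)
  have hcomb : ∑ i, (a * μ i + b * ν i) • u i = ∑ i, ((1:ℝ) * (if i = k then 1 else 0)) • u i := by
    rw [sum_single_smul, one_smul, ← habx, ← hμx, ← hνx]
    rw [Finset.sum_congr rfl (fun i _ => by rw [add_smul, mul_smul, mul_smul]),
      Finset.sum_add_distrib, ← Finset.smul_sum, ← Finset.smul_sum]
  have hsum : ∑ i, (a * μ i + b * ν i) = 1 := by
    rw [Finset.sum_add_distrib, ← Finset.mul_sum, ← Finset.mul_sum, hμ1, hν1]; linarith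
  have hδsum : ∑ i, (1:ℝ) * (if i = k then 1 else 0) = 1 := sum_single 1 k
  have heqw := bary_unique hu hsum hδsum hcomb
  have hzero : ∀ i, i ≠ k → μ i = 0 ∧ ν i = 0 := by
    intro i hik
    have h0 : a * μ i + b * ν i = 0 := by
      have := congrFun heqw i; simpa [hik] using this
    constructor <;> nlinarith [hμ0 i, hν0 i]
  have hμk : μ k = 1 := by
    rw [← hμ1, Finset.sum_eq_single k (fun b _ hb => (hzero b hb).1)
      (fun h => absurd (Finset.mem_univ k) h)]
  have hνk : ν k = 1 := by
    rw [← hν1, Finset.sum_eq_single k (fun b _ hb => (hzero b hb).2)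
      (fun h => absurd (Finset.mem_univ k) h)]
  have hx1 : x₁ = u k := by
    rw [← hμx, Finset.sum_eq_single k (fun b _ hb => by rw [(hzero b hb).1, zero_smul])
      (fun h => absurd (Finset.mem_univ k) h), hμk, one_smul]
  have hx2 : x₂ = u k := by
    rw [← hνx, Finset.sum_eq_single k (fun b _ hb => by rw [(hzero b hb).2, zero_smul])
      (fun h => absurd (Finset.mem_univ k) h), hνk, one_smul]
  exact hx1

lemma eq_cross_of_coords (hu : AffineIndependent ℝ u) (f : Euc N →L[ℝ] ℝ) {c : ℝ}
    {i j : Fin (n+1)} (hij : f (u i) ≠ f (u j))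
    {t : ℝ} (hmt : f (u i) + t * (f (u j) - f (u i)) = c)
    {μ : Fin (n+1) → ℝ} (hμ1 : ∑ l, μ l = 1) (hsupp : ∀ l, l ≠ i → l ≠ j → μ l = 0)
    (hfx : f (∑ l, μ l • u l) = c) :
    ∑ l, μ l • u l = u i + t • (u j - u i) := by
  have hij' : i ≠ j := fun h => hij (by rw [h])
  have hsum2 : ∑ l, μ l • u l = μ i • u i + μ j • u j :=
    Finset.sum_eq_add_of_mem i j (Finset.mem_univ i) (Finset.mem_univ j) hij'
      (fun k _ ⟨hki, hkj⟩ => by rw [hsupp k hki hkj, zero_smul])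
  have hμij : μ i + μ j = 1 := by
    rw [← hμ1, Finset.sum_eq_add_of_mem i j (Finset.mem_univ i) (Finset.mem_univ j) hij'
      (fun k _ ⟨hki, hkj⟩ => hsupp k hki hkj)]
  have hf2 : μ i * f (u i) + μ j * f (u j) = c := by
    rw [hsum2] at hfx; simpa [map_add, _root_.map_smul, smul_eq_mul] using hfx
  have hμj : μ j = t := by
    have h1 : μ j * (f (u j) - f (u i)) = t * (f (u j) - f (u i)) := by
      linear_combination hf2 - hmt - f (u i) * hμij
    exact mul_right_cancel₀ (sub_ne_zero.2 (Ne.symm hij)) h1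
  have hμi : μ i = 1 - t := by linarith
  rw [hsum2, hμi, hμj]; module

set_option maxHeartbeats 1000000 in
lemma extreme_cross (hu : AffineIndependent ℝ u) (f : Euc N →L[ℝ] ℝ) (c : ℝ)
    {i j : Fin (n+1)} {t : ℝ} {m : Euc N}
    (hi : f (u i) < c) (hj : c < f (u j)) (ht0 : 0 < t) (ht1 : t < 1)
    (hm : m = u i + t • (u j - u i)) (hfm : f m = c) :
    m ∈ (convexHull ℝ (Set.range u) ∩ {x | f x ≤ c}).extremePoints ℝ := by
  have hij : f (u i) ≠ f (u j) := ne_of_lt (lt_trans hi hj)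
  have hij' : i ≠ j := fun h => hij (by rw [h])
  have hmt : f (u i) + t * (f (u j) - f (u i)) = c := by
    rw [hm] at hfm; simpa [map_add, _root_.map_smul, map_sub, smul_eq_mul] using hfm
  have hmemU : m ∈ convexHull ℝ (Set.range u) := by
    rw [hm]; exact cross_mem_hull ht0.le ht1.le
  rw [mem_extremePoints]
  refine ⟨⟨hmemU, le_of_eq hfm⟩, fun x₁ hx₁ x₂ hx₂ hseg => ?_⟩
  obtain ⟨a, b, ha, hb, hab, habx⟩ := hseg
  obtain ⟨μ, hμ0, hμ1, hμx⟩ := (mem_convexHull_range_iff u).1 hx₁.1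
  obtain ⟨ν, hν0, hν1, hνx⟩ := (mem_convexHull_range_iff u).1 hx₂.1
  have hfc : a * f x₁ + b * f x₂ = c := by
    rw [← hfm, ← habx]; simp [map_add, _root_.map_smul, smul_eq_mul]
  have hle₁ : f x₁ ≤ c := hx₁.2
  have hle₂ : f x₂ ≤ c := hx₂.2
  have habc : a * c + b * c = c := by rw [← add_mul, hab, one_mul]
  have hfx₁ : f x₁ = c := by
    by_contra hne
    have hlt : f x₁ < c := lt_of_le_of_ne hle₁ hne
    linarith [mul_lt_mul_of_pos_left hlt ha, mul_le_mul_of_nonneg_left hle₂ hb.le]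
  have hfx₂ : f x₂ = c := by
    by_contra hne
    have hlt : f x₂ < c := lt_of_le_of_ne hle₂ hne
    linarith [mul_lt_mul_of_pos_left hlt hb, mul_le_mul_of_nonneg_left hle₁ ha.le]
  have hcomb : ∑ l, (a * μ l + b * ν l) • u l = ∑ l, kap i j t l • u l := by
    rw [kap_smul_sum, ← hm, ← habx, ← hμx, ← hνx]
    rw [Finset.sum_congr rfl (fun l _ => by rw [add_smul, mul_smul, mul_smul]),
      Finset.sum_add_distrib, ← Finset.smul_sum, ← Finset.smul_sum]
  have hsum : ∑ l, (a * μ l + b * ν l) = 1 := by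
    rw [Finset.sum_add_distrib, ← Finset.mul_sum, ← Finset.mul_sum, hμ1, hν1]; linarith
  have heqw := bary_unique hu hsum (kap_sum t) hcomb
  have hzero : ∀ l, l ≠ i → l ≠ j → μ l = 0 ∧ ν l = 0 := by
    intro l hli hlj
    have h0 : a * μ l + b * ν l = 0 := by
      have := congrFun heqw l; simpa [kap, hli, hlj] using this
    constructor <;> nlinarith [hμ0 l, hν0 l]
  have hx1 : x₁ = m := by
    rw [← hμx, hm]
    exact eq_cross_of_coords hu f hij hmt hμ1 (fun l h1 h2 => (hzero l h1 h2).1)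
      (by rw [hμx]; exact hfx₁)
  have hx2 : x₂ = m := by
    rw [← hνx, hm]
    exact eq_cross_of_coords hu f hij hmt hν1 (fun l h1 h2 => (hzero l h1 h2).2)
      (by rw [hνx]; exact hfx₂)
  exact ⟨hx1, hx2⟩

lemma cross_ne_vertex (hu : AffineIndependent ℝ u) {i j k : Fin (n+1)} (hij : i ≠ j)
    {t : ℝ} (ht0 : 0 < t) (ht1 : t < 1) : u k ≠ u i + t • (u j - u i) := by
  intro heq
  have h1 : ∑ l, ((1:ℝ) * (if l = k then 1 else 0)) • u l = ∑ l, kap i j t l • u l := by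
    rw [kap_smul_sum, sum_single_smul, one_smul]; exact heq
  have := bary_unique hu (sum_single 1 k) (kap_sum t) h1
  have hi := congrFun this i
  simp [kap, hij] at hi
  by_cases hki : i = k
  · simp [hki] at hi; linarith
  · simp [hki] at hi; linarith

lemma cross_inj (hu : AffineIndependent ℝ u) {i j i' j' : Fin (n+1)}
    (hij : i ≠ j) (hij' : i' ≠ j') (hij2 : i ≠ j') (hij3 : i' ≠ j)
    {t t' : ℝ} (ht0 : 0 < t) (ht1 : t < 1) (ht0' : 0 < t') (ht1' : t' < 1)
    (heq : u i + t • (u j - u i) = u i' + t' • (u j' - u i')) : i = i' ∧ j = j' := by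
  have h1 : ∑ l, kap i j t l • u l = ∑ l, kap i' j' t' l • u l := by
    rw [kap_smul_sum, kap_smul_sum]; exact heq
  have hk := bary_unique hu (kap_sum t) (kap_sum t') h1
  constructor
  · by_contra hii
    have h := congrFun hk i
    simp [kap, hij, hii, hij2] at h
    linarith
  · by_contra hjj
    have h := congrFun hk j
    simp [kap, Ne.symm hij, hjj, Ne.symm hij3] at h
    linarith

end Extreme

lemma le_on {S : Set (Euc N)} (hSc : Convex ℝ S) {f : Euc N →L[ℝ] ℝ} {c : ℝ}
    (hSlt : ∀ x ∈ intrinsicInterior ℝ S, f x < c) {z : Euc N}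
    (hz : z ∈ intrinsicInterior ℝ S) : ∀ x ∈ S, f x ≤ c := by
  intro x hx
  by_contra h
  push_neg at h
  have hfz : f z < c := hSlt z hz
  have hd : 0 < f x - f z := by linarith
  set t := min 1 ((f x - c) / (2 * (f x - f z))) with ht
  have ht0 : 0 < t := lt_min one_pos (div_pos (by linarith) (by linarith))
  have ht1 : t ≤ 1 := min_le_left _ _
  have hmem := relint_segment hSc hx hz ht0 ht1
  have hflt := hSlt _ hmem
  have hfw : f (x + t • (z - x)) = f x - t * (f x - f z) := by
    simp [map_add, _root_.map_smul, map_sub, smul_eq_mul]; ring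
  rw [hfw] at hflt
  have htle : t * (f x - f z) ≤ (f x - c) / 2 := by
    have h1 : t ≤ (f x - c) / (2 * (f x - f z)) := min_le_right _ _
    have h2 : t * (f x - f z) ≤ ((f x - c) / (2 * (f x - f z))) * (f x - f z) :=
      mul_le_mul_of_nonneg_right h1 hd.le
    have h3 : ((f x - c) / (2 * (f x - f z))) * (f x - f z) = (f x - c) / 2 := by
      field_simp
    linarith
  linarith

lemma half {S T U : Set (Euc N)} (hSc : Convex ℝ S) (hScl : IsClosed S) (hUc : Convex ℝ U)
    (hunion : S ∪ T = U) {f : Euc N →L[ℝ] ℝ} {c : ℝ}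
    {z : Euc N} (hz : z ∈ intrinsicInterior ℝ S) (hfz : f z < c)
    (hSle : ∀ x ∈ S, f x ≤ c) (hTge : ∀ x ∈ T, c ≤ f x) :
    S = U ∩ {x | f x ≤ c} := by
  have hzS : z ∈ S := intrinsicInterior_subset hz
  have hSU : S ⊆ U := hunion ▸ subset_union_left
  apply Subset.antisymm
  · exact fun x hx => ⟨hSU hx, hSle x hx⟩
  · rintro x ⟨hxU, hxle⟩
    have hxle : f x ≤ c := hxle
    have hkey : ∀ t : ℝ, 0 < t → t ≤ 1 → x + t • (z - x) ∈ S := by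
      intro t ht0 ht1
      have hwU : x + t • (z - x) ∈ U := by
        have := hUc hxU (hSU hzS) (by linarith : (0:ℝ) ≤ 1 - t) ht0.le (by ring)
        convert this using 1; module
      have hfw : f (x + t • (z - x)) < c := by
        have hfw' : f (x + t • (z - x)) = (1 - t) * f x + t * f z := by
          simp [map_add, _root_.map_smul, map_sub, smul_eq_mul]; ring
        rw [hfw']
        nlinarith [mul_le_mul_of_nonneg_left hxle (by linarith : (0:ℝ) ≤ 1 - t),
          mul_lt_mul_of_pos_left hfz ht0]
      rcases (hunion ▸ hwU : _ ∈ S ∪ T) with h | h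
      · exact h
      · exact absurd (hTge _ h) (not_le.2 hfw)
    have hxcl : x ∈ closure S := by
      rw [Metric.mem_closure_iff]
      intro ε hε
      set D := ‖z - x‖ with hD
      have hD0 : 0 ≤ D := norm_nonneg _
      set t := min 1 (ε / (D + 1)) with htdef
      have ht0 : 0 < t := lt_min one_pos (by positivity)
      have ht1 : t ≤ 1 := min_le_left _ _
      refine ⟨x + t • (z - x), hkey t ht0 ht1, ?_⟩
      have : dist x (x + t • (z - x)) = t * D := by
        rw [dist_eq_norm]
        simp only [hD]
        rw [show x - (x + t • (z - x)) = (-t) • (z - x) by module, norm_smul]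
        simp [abs_of_pos ht0]
      rw [this]
      have h1 : t ≤ ε / (D + 1) := min_le_right _ _
      have h2 : t * D ≤ (ε / (D + 1)) * D := mul_le_mul_of_nonneg_right h1 hD0
      have h3 : (ε / (D + 1)) * D < ε := by
        rw [div_mul_eq_mul_div, div_lt_iff₀ (by linarith : (0:ℝ) < D + 1)]
        nlinarith
      linarith
    rwa [hScl.closure_eq] at hxcl

set_option maxHeartbeats 1000000 in
lemma separation_main {n : ℕ} {S T U : Set (Euc N)}
    (hSc : Convex ℝ S) (hScl : IsClosed S) (hSne : S.Nonempty)
    (hTc : Convex ℝ T) (hTcl : IsClosed T) (hTne : T.Nonempty)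
    (hUc : Convex ℝ U)
    (hfinS : Module.finrank ℝ (vectorSpan ℝ S) = n)
    (hfinT : Module.finrank ℝ (vectorSpan ℝ T) = n)
    (hfinU : Module.finrank ℝ (vectorSpan ℝ U) = n)
    (hunion : S ∪ T = U)
    (hdisj : intrinsicInterior ℝ S ∩ intrinsicInterior ℝ T = ∅) :
    ∃ (f : Euc N →L[ℝ] ℝ) (c : ℝ), S = U ∩ {x | f x ≤ c} ∧ T = U ∩ {x | c ≤ f x} ∧
      (∃ x ∈ S, f x < c) ∧ (∃ y ∈ T, c < f y) := by
  have hSU : S ⊆ U := hunion ▸ subset_union_left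
  have hTU : T ⊆ U := hunion ▸ subset_union_right
  -- affine spans agree
  have hspan : ∀ W : Set (Euc N), W ⊆ U → W.Nonempty →
      Module.finrank ℝ (vectorSpan ℝ W) = n → affineSpan ℝ W = affineSpan ℝ U := by
    intro W hWU hWne hWfin
    have hle : affineSpan ℝ W ≤ affineSpan ℝ U := affineSpan_mono ℝ hWU
    have hdle : (affineSpan ℝ W).direction ≤ (affineSpan ℝ U).direction :=
      AffineSubspace.direction_le hle
    have hdeq : (affineSpan ℝ W).direction = (affineSpan ℝ U).direction := by
      apply Submodule.eq_of_le_of_finrank_le hdle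
      rw [direction_affineSpan, direction_affineSpan, hWfin, hfinU]
    obtain ⟨x, hx⟩ := hWne
    exact AffineSubspace.ext_of_direction_eq hdeq
      ⟨x, subset_affineSpan ℝ W hx, subset_affineSpan ℝ U (hWU hx)⟩
  have hTS : affineSpan ℝ T = affineSpan ℝ S := by
    rw [hspan T hTU hTne hfinT, hspan S hSU hSne hfinS]
  obtain ⟨p₀, hp₀S⟩ := hSne
  have hp₀ : p₀ ∈ affineSpan ℝ S := subset_affineSpan ℝ S hp₀S
  set V := (affineSpan ℝ S).direction with hV
  set π : Euc N → Euc N := fun x => p₀ + (Submodule.orthogonalProjection V (x - p₀) : Euc N) with hπ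
  have hπA : ∀ x, π x ∈ affineSpan ℝ S := by
    intro x
    have h1 : ((Submodule.orthogonalProjection V (x - p₀) : Euc N)) ∈ V := (Submodule.orthogonalProjection V (x - p₀)).2
    have := AffineSubspace.vadd_mem_of_mem_direction h1 hp₀
    simpa [π, vadd_eq_add, add_comm] using this
  have hπid : ∀ x ∈ affineSpan ℝ S, π x = x := by
    intro x hx
    have h1 : x - p₀ ∈ V := by
      have := AffineSubspace.vsub_mem_direction hx hp₀
      simpa [vsub_eq_sub] using this
    have h2 := Submodule.orthogonalProjection_mem_subspace_eq_self (K := V) ⟨x - p₀, h1⟩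
    simp only [π]
    rw [h2]
    simp
  have hπlip : ∀ x y, dist (π x) (π y) ≤ dist x y := by
    intro x y
    rw [dist_eq_norm, dist_eq_norm]
    have h1 : π x - π y = (Submodule.orthogonalProjection V ((x - p₀) - (y - p₀)) : Euc N) := by
      simp only [π, map_sub]
      push_cast
      module
    have h2 : (x - p₀) - (y - p₀) = x - y := by module
    rw [h1, h2]
    calc ‖(Submodule.orthogonalProjection V (x - y) : Euc N)‖
        = ‖Submodule.orthogonalProjection V (x - y)‖ := rfl
      _ ≤ ‖Submodule.orthogonalProjection V‖ * ‖x - y‖ := (Submodule.orthogonalProjection V).le_opNorm _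
      _ ≤ 1 * ‖x - y‖ :=
          mul_le_mul_of_nonneg_right (Submodule.orthogonalProjection_norm_le V) (norm_nonneg _)
      _ = ‖x - y‖ := one_mul _
  -- the open preimages
  have hopen : ∀ W : Set (Euc N), affineSpan ℝ W = affineSpan ℝ S →
      IsOpen (π ⁻¹' (intrinsicInterior ℝ W)) := by
    intro W hWS
    rw [Metric.isOpen_iff]
    intro x hx
    rw [mem_preimage, mem_intrinsicInterior_iff'] at hx
    obtain ⟨hxs, ε, hε, hball⟩ := hx
    rw [hWS] at hball
    refine ⟨ε / 2, by positivity, fun y hy => ?_⟩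
    rw [Metric.mem_ball] at hy
    have hdy : dist (π y) (π x) < ε / 2 := lt_of_le_of_lt (hπlip y x) hy
    rw [mem_preimage, mem_intrinsicInterior_iff']
    have hπyW : π y ∈ W := hball (π y) (hπA y) (by linarith)
    refine ⟨hπyW, ε / 2, by positivity, fun w hw hdw => ?_⟩
    rw [hWS] at hw
    refine hball w hw ?_
    calc dist w (π x) ≤ dist w (π y) + dist (π y) (π x) := dist_triangle _ _ _
      _ < ε := by linarith
  have hconv : ∀ W : Set (Euc N), Convex ℝ W →
      Convex ℝ (π ⁻¹' (intrinsicInterior ℝ W)) := by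
    intro W hWc x hx y hy a b ha hb hab
    rw [mem_preimage]
    have hπab : π (a • x + b • y) = a • π x + b • π y := by
      have hb' : b = 1 - a := by linarith
      subst hb'
      simp only [π, map_add, _root_.map_smul]
      push_cast
      have harg : a • x + (1 - a) • y - p₀ = a • (x - p₀) + (1 - a) • (y - p₀) := by module
      rw [harg]
      simp only [map_add, _root_.map_smul]
      push_cast
      module
    rw [hπab]
    exact relint_convex hWc hx hy ha hb hab
  -- separate
  have hdisj' : Disjoint (π ⁻¹' (intrinsicInterior ℝ S)) (π ⁻¹' (intrinsicInterior ℝ T)) := by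
    rw [Set.disjoint_left]
    intro x hxS hxT
    have : π x ∈ intrinsicInterior ℝ S ∩ intrinsicInterior ℝ T := ⟨hxS, hxT⟩
    rw [hdisj] at this
    exact this
  obtain ⟨f, c, hfS, hfT⟩ := geometric_hahn_banach_open_open
    (hconv S hSc) (hopen S rfl) (hconv T hTc) (hopen T hTS) hdisj'
  have hSsub : intrinsicInterior ℝ S ⊆ π ⁻¹' (intrinsicInterior ℝ S) := by
    intro x hx
    rw [mem_preimage, hπid x (subset_affineSpan ℝ S (intrinsicInterior_subset hx))]
    exact hx
  have hTsub : intrinsicInterior ℝ T ⊆ π ⁻¹' (intrinsicInterior ℝ T) := by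
    intro x hx
    have hxT : x ∈ affineSpan ℝ T := subset_affineSpan ℝ T (intrinsicInterior_subset hx)
    rw [hTS] at hxT
    rw [mem_preimage, hπid x hxT]
    exact hx
  have hSlt : ∀ x ∈ intrinsicInterior ℝ S, f x < c := fun x hx => hfS x (hSsub hx)
  have hTgt : ∀ x ∈ intrinsicInterior ℝ T, c < f x := fun x hx => hfT x (hTsub hx)
  obtain ⟨zS, hzS⟩ := Set.Nonempty.intrinsicInterior hSc ⟨p₀, hp₀S⟩
  obtain ⟨zT, hzT⟩ := Set.Nonempty.intrinsicInterior hTc hTne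
  have hSle : ∀ x ∈ S, f x ≤ c := le_on hSc hSlt hzS
  have hTge : ∀ x ∈ T, c ≤ f x := by
    have := le_on hTc (f := -f) (c := -c) (fun x hx => by simpa using hTgt x hx) hzT
    intro x hx
    have := this x hx
    simpa using this
  have hSeq : S = U ∩ {x | f x ≤ c} :=
    half hSc hScl hUc hunion hzS (hSlt zS hzS) hSle hTge
  have hTeq : T = U ∩ {x | c ≤ f x} := by
    have h1 : T = U ∩ {x | (-f) x ≤ -c} := by
      apply half hTc hTcl hUc (by rw [union_comm]; exact hunion) hzT
        (by simpa using hTgt zT hzT)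
      · intro x hx; simpa using hTge x hx
      · intro x hx; simpa using hSle x hx
    rw [h1]
    congr 1
    ext x
    simp
  exact ⟨f, c, hSeq, hTeq, ⟨zS, intrinsicInterior_subset hzS, hSlt zS hzS⟩,
    ⟨zT, intrinsicInterior_subset hzT, hTgt zT hzT⟩⟩

set_option maxHeartbeats 1000000 in
lemma main_facet {n : ℕ} {u : Fin (n+1) → Euc N} (hu : AffineIndependent ℝ u)
    (f : Euc N →L[ℝ] ℝ) (c : ℝ) (p q : Fin (n+1))
    (hp : f (u p) < c) (hq : c < f (u q))
    (hC : ∀ i, i ≠ p → i ≠ q → f (u i) = c)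
    {S' : Set (Euc N)} (hS' : S' = convexHull ℝ (Set.range u) ∩ {x | f x ≤ c})
    (hfin : Module.finrank ℝ (vectorSpan ℝ S') = n) :
    ∃ v : Fin (n+1) → Euc N, AffineIndependent ℝ v ∧ S' = convexHull ℝ (Set.range v) ∧
      ∃ i : Fin (n+1), convexHull ℝ (Set.range u) ∩ {x | f x = c} =
        convexHull ℝ (v '' ({i}ᶜ : Set (Fin (n+1)))) := by
  have hlin : IsLinearMap ℝ f := ⟨map_add f, _root_.map_smul f⟩
  have hpq : p ≠ q := fun h => by rw [h] at hp; linarith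
  have hD : 0 < f (u q) - f (u p) := by linarith
  have hcp : 0 < c - f (u p) := by linarith
  have hcpne : c - f (u p) ≠ 0 := ne_of_gt hcp
  obtain ⟨t, htdef⟩ : ∃ t : ℝ, t = (c - f (u p)) / (f (u q) - f (u p)) := ⟨_, rfl⟩
  have ht0 : 0 < t := htdef ▸ div_pos hcp hD
  have ht1 : t < 1 := by rw [htdef, div_lt_one hD]; linarith
  have htne : t ≠ 0 := ne_of_gt ht0
  obtain ⟨m, hmdef⟩ : ∃ m : Euc N, m = u p + t • (u q - u p) := ⟨_, rfl⟩
  have hfm : f m = c := by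
    have h1 : f m = f (u p) + t * (f (u q) - f (u p)) := by
      simp [hmdef, map_add, _root_.map_smul, map_sub, smul_eq_mul]
    rw [h1, htdef, div_mul_cancel₀ _ (ne_of_gt hD)]; ring
  obtain ⟨v, hvdef⟩ : ∃ v : Fin (n+1) → Euc N, v = fun i => if i = q then m else u i := ⟨_, rfl⟩
  have hmU : m ∈ convexHull ℝ (Set.range u) := by
    have h1 : m = (1 - t) • u p + t • u q := by rw [hmdef]; module
    rw [h1]
    exact (convex_convexHull ℝ (Set.range u)) (subset_convexHull ℝ _ (mem_range_self p))
      (subset_convexHull ℝ _ (mem_range_self q)) (by linarith) ht0.le (by ring)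
  have huU : ∀ i, u i ∈ convexHull ℝ (Set.range u) :=
    fun i => subset_convexHull ℝ _ (mem_range_self i)
  have hsum_ite : ∀ (A : ℝ) (k : Fin (n+1)), ∑ i, (if i = k then A else 0) • u i = A • u k := by
    intro A k
    rw [Finset.sum_eq_single k]
    · simp
    · intro b _ hb; simp [hb]
    · simp
  -- the key representation lemma
  have key : ∀ x ∈ convexHull ℝ (Set.range u), f x ≤ c →
      ∃ μ : Fin (n+1) → ℝ, (∀ i, 0 ≤ μ i) ∧ ∑ i, μ i = 1 ∧ ∑ i, μ i • v i = x ∧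
        (f x = c → μ p = 0) := by
    intro x hxU hfx
    obtain ⟨lam, hl0, hl1, hlx⟩ := (mem_convexHull_range_iff u).1 hxU
    obtain ⟨μ, hμdef⟩ : ∃ μ : Fin (n+1) → ℝ, μ = fun i =>
        lam i + (if i = q then lam q * (1/t - 1) else 0) +
          (if i = p then -(lam q * (1-t)/t) else 0) := ⟨_, rfl⟩
    have hfxval : f x = c + lam p * (f (u p) - c) + lam q * (f (u q) - c) := by
      rw [← hlx]
      have h1 : f (∑ i, lam i • u i) = ∑ i, lam i * f (u i) := by
        rw [map_sum]; congr 1; ext i; rw [_root_.map_smul, smul_eq_mul]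
      rw [h1]
      have h2 : ∀ i, lam i * f (u i) = lam i * c + (if i = p then lam p * (f (u p) - c) else 0)
          + (if i = q then lam q * (f (u q) - c) else 0) := by
        intro i
        by_cases hip : i = p
        · subst hip; rw [if_pos rfl, if_neg hpq]; ring
        by_cases hiq : i = q
        · subst hiq; rw [if_neg (Ne.symm hpq), if_pos rfl]; ring
        · rw [if_neg hip, if_neg hiq, hC i hip hiq]; ring
      rw [Finset.sum_congr rfl (fun i _ => h2 i), Finset.sum_add_distrib,
        Finset.sum_add_distrib, ← Finset.sum_mul, hl1,
        Finset.sum_ite_eq' Finset.univ p, Finset.sum_ite_eq' Finset.univ q]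
      simp only [Finset.mem_univ, if_true]
      ring
    have hbal : lam q * (f (u q) - c) ≤ lam p * (c - f (u p)) := by
      have h := hfx; rw [hfxval] at h; linarith
    have h1t : lam q * (1-t)/t = lam q * (f (u q) - c) / (c - f (u p)) := by
      rw [htdef]; field_simp; ring
    have hμp : μ p = lam p - lam q * (1-t)/t := by
      simp only [hμdef, if_neg hpq, eq_self_iff_true, if_true]; ring
    have hμq : μ q = lam q / t := by
      simp only [hμdef, if_neg (Ne.symm hpq), eq_self_iff_true, if_true]; field_simp; ring
    have hμp0 : 0 ≤ μ p := by
      rw [hμp, h1t, sub_nonneg, div_le_iff₀ hcp]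
      exact hbal
    refine ⟨μ, ?_, ?_, ?_, ?_⟩
    · intro i
      by_cases hip : i = p
      · rw [hip]; exact hμp0
      by_cases hiq : i = q
      · rw [hiq, hμq]; exact div_nonneg (hl0 q) ht0.le
      · simp only [hμdef]; rw [if_neg hip, if_neg hiq]
        simpa using hl0 i
    · simp only [hμdef]
      rw [Finset.sum_add_distrib, Finset.sum_add_distrib,
        Finset.sum_ite_eq' Finset.univ q, Finset.sum_ite_eq' Finset.univ p, hl1]
      simp only [Finset.mem_univ, if_true]
      field_simp
      all_goals ring
    · have hstep1 : ∑ i, μ i • v i = (∑ i, μ i • u i) + μ q • (m - u q) := by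
        have hsub : ∑ i, (μ i • v i - μ i • u i) = μ q • (m - u q) := by
          rw [Finset.sum_eq_single q]
          · simp only [hvdef, eq_self_iff_true, if_true, smul_sub]
          · intro b _ hb; simp only [hvdef, if_neg hb, sub_self]
          · simp
        rw [← hsub, Finset.sum_sub_distrib]
        abel
      have hstep2 : ∑ i, μ i • u i =
          (∑ i, lam i • u i) + (lam q * (1/t - 1)) • u q + (-(lam q * (1-t)/t)) • u p := by
        have h1 : ∀ i, μ i • u i = lam i • u i + (if i = q then lam q * (1/t-1) else 0) • u i
            + (if i = p then -(lam q * (1-t)/t) else 0) • u i := by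
          intro i; simp only [hμdef]; rw [add_smul, add_smul]
        rw [Finset.sum_congr rfl (fun i _ => h1 i), Finset.sum_add_distrib,
          Finset.sum_add_distrib, hsum_ite, hsum_ite]
      rw [hstep1, hstep2, hlx, hμq, hmdef]
      match_scalars <;> (field_simp; try ring)
    · intro hfxc
      have hEq : lam q * (f (u q) - c) = lam p * (c - f (u p)) := by
        rw [hfxc] at hfxval; linarith
      rw [hμp, h1t, hEq]
      field_simp; ring
  -- S' equals the hull of the new vertices
  have hconvS' : Convex ℝ S' := by
    rw [hS']; exact (convex_convexHull ℝ _).inter (convex_halfSpace_le hlin c)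
  have hrange_sub : Set.range v ⊆ S' := by
    rintro _ ⟨i, rfl⟩
    rw [hS']
    by_cases hiq : i = q
    · subst hiq; rw [hvdef]; simp only [eq_self_iff_true, if_true]
      exact ⟨hmU, le_of_eq hfm⟩
    · rw [hvdef]; simp only [if_neg hiq]
      refine ⟨huU i, ?_⟩
      by_cases hip : i = p
      · subst hip; exact hp.le
      · exact (hC i hip hiq).le
  have hSv : S' = convexHull ℝ (Set.range v) := by
    apply Set.Subset.antisymm
    · intro x hx
      rw [hS'] at hx
      obtain ⟨μ, h0, h1, h2, _⟩ := key x hx.1 hx.2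
      exact (mem_convexHull_range_iff v).2 ⟨μ, h0, h1, h2⟩
    · exact convexHull_min hrange_sub hconvS'
  have hvind : AffineIndependent ℝ v := by
    rw [affineIndependent_iff_finrank_vectorSpan_eq ℝ v (Fintype.card_fin (n+1))]
    rw [← vectorSpan_convexHull' (Set.range v), ← hSv]
    exact hfin
  have hface : convexHull ℝ (Set.range u) ∩ {x | f x = c} =
      convexHull ℝ (v '' ({p}ᶜ : Set (Fin (n+1)))) := by
    have hr : Set.range (v ∘ (Subtype.val : {i : Fin (n+1) // i ≠ p} → Fin (n+1)))
        = v '' ({p}ᶜ : Set (Fin (n+1))) := by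
      rw [Set.range_comp, Subtype.range_val_subtype, Set.compl_singleton_eq]
    apply Set.Subset.antisymm
    · rintro x ⟨hxU, hxc⟩
      have hxc' : f x = c := hxc
      obtain ⟨μ, h0, h1, h2, hμp0⟩ := key x hxU hxc'.le
      have hμp00 : μ p = 0 := hμp0 hxc'
      rw [← hr]
      refine (mem_convexHull_range_iff _).2 ⟨fun i => μ i.val, fun i => h0 i.val, ?_, ?_⟩
      · show ∑ i : {i : Fin (n+1) // i ≠ p}, μ i.val = 1
        rw [← Finset.sum_subtype (p := fun i => i ≠ p) (Finset.univ.erase p)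
          (fun i => by simp [Finset.mem_erase]) μ]
        rw [Finset.sum_erase _ hμp00]
        exact h1
      · show ∑ i : {i : Fin (n+1) // i ≠ p}, μ i.val • v i.val = x
        rw [← Finset.sum_subtype (p := fun i => i ≠ p) (Finset.univ.erase p)
          (fun i => by simp [Finset.mem_erase]) (fun i => μ i • v i)]
        rw [Finset.sum_erase _ (by rw [hμp00, zero_smul])]
        exact h2
    · apply convexHull_min
      · rintro _ ⟨i, hi, rfl⟩
        have hip : i ≠ p := hi
        by_cases hiq : i = q
        · subst hiq; rw [hvdef]; simp only [eq_self_iff_true, if_true]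
          exact ⟨hmU, hfm⟩
        · rw [hvdef]; simp only [if_neg hiq]
          exact ⟨huU i, hC i hip hiq⟩
      · exact (convex_convexHull ℝ _).inter (convex_hyperplane hlin c)
  exact ⟨v, hvind, hSv, p, hface⟩

end Helpers

set_option maxHeartbeats 2000000 in
/-- if two `n`-simplices with disjoint relative interiors have a simplex as
their union, then their intersection is a common facet whose affine hull contains an
`(n-2)`-dimensional face of the union. -/
theorem merge_is_inverse_of_dissection {N n : ℕ} (S T : Set (Euc N))
    (hS : IsSimplex n S) (hT : IsSimplex n T)
    (hdisj : intrinsicInterior ℝ S ∩ intrinsicInterior ℝ T = ∅)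
    (hU : IsSimplex n (S ∪ T)) :
    (∃ v : Fin (n + 1) → Euc N, AffineIndependent ℝ v ∧ S = convexHull ℝ (Set.range v) ∧
        ∃ i : Fin (n + 1), S ∩ T = convexHull ℝ (v '' ({i}ᶜ : Set (Fin (n + 1))))) ∧
      (∃ w : Fin (n + 1) → Euc N, AffineIndependent ℝ w ∧ T = convexHull ℝ (Set.range w) ∧
        ∃ i : Fin (n + 1), S ∩ T = convexHull ℝ (w '' ({i}ᶜ : Set (Fin (n + 1))))) ∧
      ∃ u : Fin (n + 1) → Euc N, AffineIndependent ℝ u ∧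
        S ∪ T = convexHull ℝ (Set.range u) ∧
        ∃ s : Finset (Fin (n + 1)), s.card = n - 1 ∧
          convexHull ℝ (u '' (s : Set (Fin (n + 1)))) ⊆
            ((affineSpan ℝ (S ∩ T)) : Set (Euc N)) := by
  obtain ⟨vS, hvS, hSv⟩ := hS
  obtain ⟨vT, hvT, hTv⟩ := hT
  obtain ⟨u, hu, hUu⟩ := hU
  have hcard : Fintype.card (Fin (n+1)) = n+1 := Fintype.card_fin _
  have hfinS : Module.finrank ℝ (vectorSpan ℝ S) = n := by
    rw [hSv, vectorSpan_convexHull']; exact hvS.finrank_vectorSpan hcard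
  have hfinT : Module.finrank ℝ (vectorSpan ℝ T) = n := by
    rw [hTv, vectorSpan_convexHull']; exact hvT.finrank_vectorSpan hcard
  have hfinU : Module.finrank ℝ (vectorSpan ℝ (S ∪ T)) = n := by
    rw [hUu, vectorSpan_convexHull']; exact hu.finrank_vectorSpan hcard
  have hSc : Convex ℝ S := hSv ▸ convex_convexHull ℝ _
  have hTc : Convex ℝ T := hTv ▸ convex_convexHull ℝ _
  have hUc : Convex ℝ (S ∪ T) := hUu ▸ convex_convexHull ℝ _
  have hScl : IsClosed S := hSv ▸ ((Set.finite_range vS).isCompact_convexHull ℝ).isClosed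
  have hTcl : IsClosed T := hTv ▸ ((Set.finite_range vT).isCompact_convexHull ℝ).isClosed
  have hSne : S.Nonempty := hSv ▸ ⟨vS 0, subset_convexHull ℝ _ (mem_range_self 0)⟩
  have hTne : T.Nonempty := hTv ▸ ⟨vT 0, subset_convexHull ℝ _ (mem_range_self 0)⟩
  obtain ⟨f, c, hSeq, hTeq, ⟨zS, hzS, hzSlt⟩, ⟨zT, hzT, hzTgt⟩⟩ :=
    separation_main hSc hScl hSne hTc hTcl hTne hUc hfinS hfinT hfinU rfl hdisj
  have hlin : IsLinearMap ℝ f := ⟨map_add f, _root_.map_smul f⟩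
  have huU : ∀ i, u i ∈ convexHull ℝ (Set.range u) :=
    fun i => subset_convexHull ℝ _ (mem_range_self i)
  have hSeq' : S = convexHull ℝ (Set.range u) ∩ {x | f x ≤ c} := by rw [hSeq, hUu]
  have hTeq' : T = convexHull ℝ (Set.range u) ∩ {x | c ≤ f x} := by rw [hTeq, hUu]
  have hTeqneg : T = convexHull ℝ (Set.range u) ∩ {x | (-f) x ≤ -c} := by
    rw [hTeq']; congr 1; ext x; simp
  have hST : S ∩ T = convexHull ℝ (Set.range u) ∩ {x | f x = c} := by
    rw [hSeq', hTeq']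
    ext x
    constructor
    · rintro ⟨⟨h1, h2⟩, ⟨_, h3⟩⟩; exact ⟨h1, le_antisymm h2 h3⟩
    · rintro ⟨h1, h2⟩
      exact ⟨⟨h1, le_of_eq h2⟩, ⟨h1, ge_of_eq h2⟩⟩
  -- index sets
  obtain ⟨B, hBdef⟩ : ∃ B, B = Finset.univ.filter (fun i => f (u i) < c) := ⟨_, rfl⟩
  obtain ⟨C, hCdef⟩ : ∃ C, C = Finset.univ.filter (fun i => f (u i) = c) := ⟨_, rfl⟩
  obtain ⟨Q, hQdef⟩ : ∃ Q, Q = Finset.univ.filter (fun i => c < f (u i)) := ⟨_, rfl⟩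
  have hmemB : ∀ i, i ∈ B ↔ f (u i) < c := by
    intro i; rw [hBdef, Finset.mem_filter]; simp
  have hmemC : ∀ i, i ∈ C ↔ f (u i) = c := by
    intro i; rw [hCdef, Finset.mem_filter]; simp
  have hmemQ : ∀ i, i ∈ Q ↔ c < f (u i) := by
    intro i; rw [hQdef, Finset.mem_filter]; simp
  have hdBC : Disjoint B C := by
    rw [Finset.disjoint_left]
    intro i hiB hiC
    rw [hmemB] at hiB; rw [hmemC] at hiC; linarith
  have hdBCQ : Disjoint (B ∪ C) Q := by
    rw [Finset.disjoint_left]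
    intro i hi hiQ
    rw [hmemQ] at hiQ
    rcases Finset.mem_union.1 hi with h | h
    · rw [hmemB] at h; linarith
    · rw [hmemC] at h; linarith
  have hunionBCQ : B ∪ C ∪ Q = Finset.univ := by
    ext i
    simp only [Finset.mem_union, Finset.mem_univ, iff_true, hmemB, hmemC, hmemQ]
    rcases lt_trichotomy (f (u i)) c with h | h | h
    · exact Or.inl (Or.inl h)
    · exact Or.inl (Or.inr h)
    · exact Or.inr h
  have hcardsum : B.card + C.card + Q.card = n + 1 := by
    rw [← Finset.card_union_of_disjoint hdBC, ← Finset.card_union_of_disjoint hdBCQ,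
      hunionBCQ, Finset.card_univ, hcard]
  have hBne : B.Nonempty := by
    rw [Finset.nonempty_iff_ne_empty]
    intro hBe
    have hall : ∀ i, c ≤ f (u i) := by
      intro i
      by_contra h
      push_neg at h
      have : i ∈ B := (hmemB i).2 h
      rw [hBe] at this
      exact absurd this (Finset.notMem_empty i)
    have hsub : S ∪ T ⊆ {x | c ≤ f x} := by
      rw [hUu]
      exact convexHull_min (by rintro _ ⟨i, rfl⟩; exact hall i) (convex_halfSpace_ge hlin c)
    have := hsub (Or.inl hzS)
    simp only [mem_setOf_eq] at this
    linarith
  have hQne : Q.Nonempty := by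
    rw [Finset.nonempty_iff_ne_empty]
    intro hQe
    have hall : ∀ i, f (u i) ≤ c := by
      intro i
      by_contra h
      push_neg at h
      have : i ∈ Q := (hmemQ i).2 h
      rw [hQe] at this
      exact absurd this (Finset.notMem_empty i)
    have hsub : S ∪ T ⊆ {x | f x ≤ c} := by
      rw [hUu]
      exact convexHull_min (by rintro _ ⟨i, rfl⟩; exact hall i) (convex_halfSpace_le hlin c)
    have := hsub (Or.inr hzT)
    simp only [mem_setOf_eq] at this
    linarith
  -- crossing points
  obtain ⟨tc, htcdef⟩ : ∃ g : Fin (n+1) → Fin (n+1) → ℝ,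
      g = fun i j => (c - f (u i)) / (f (u j) - f (u i)) := ⟨_, rfl⟩
  obtain ⟨cr, hcrdef⟩ : ∃ g : Fin (n+1) × Fin (n+1) → Euc N,
      g = fun ij => u ij.1 + tc ij.1 ij.2 • (u ij.2 - u ij.1) := ⟨_, rfl⟩
  have hcross : ∀ i j : Fin (n+1), f (u i) < c → c < f (u j) →
      0 < tc i j ∧ tc i j < 1 ∧ f (cr (i, j)) = c := by
    intro i j hi hj
    have hD : 0 < f (u j) - f (u i) := by linarith
    have ht0 : 0 < tc i j := by rw [htcdef]; exact div_pos (by linarith) hD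
    have ht1 : tc i j < 1 := by rw [htcdef]; rw [div_lt_one hD]; linarith
    refine ⟨ht0, ht1, ?_⟩
    have h1 : f (cr (i, j)) = f (u i) + tc i j * (f (u j) - f (u i)) := by
      rw [hcrdef]
      simp [map_add, _root_.map_smul, map_sub, smul_eq_mul]
    rw [h1, htcdef, div_mul_cancel₀ _ (ne_of_gt hD)]
    ring
  have hBQne : ∀ i j : Fin (n+1), i ∈ B → j ∈ Q → i ≠ j := by
    intro i j hi hj h
    rw [hmemB] at hi; rw [hmemQ] at hj
    rw [h] at hi; linarith
  -- extreme point bounds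
  have hcount : ∀ (W : Set (Euc N)) (vW : Fin (n+1) → Euc N) (X : Finset (Fin (n+1))),
      W = convexHull ℝ (Set.range vW) →
      (↑(X.image u ∪ (B ×ˢ Q).image cr) : Set (Euc N)) ⊆ W.extremePoints ℝ →
      X.card + B.card * Q.card ≤ n + 1 := by
    intro W vW X hWv hsub
    have hext : W.extremePoints ℝ ⊆ Set.range vW := by
      rw [hWv]; exact extremePoints_convexHull_subset
    have hsub2 : X.image u ∪ (B ×ˢ Q).image cr ⊆ Finset.univ.image vW := by
      intro x hx
      obtain ⟨i, hi⟩ := hext (hsub hx)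
      exact Finset.mem_image.2 ⟨i, Finset.mem_univ i, hi⟩
    have hdisj2 : Disjoint (X.image u) ((B ×ˢ Q).image cr) := by
      rw [Finset.disjoint_left]
      rintro x hx1 hx2
      obtain ⟨k, _, rfl⟩ := Finset.mem_image.1 hx1
      obtain ⟨⟨i, j⟩, hij, hcr⟩ := Finset.mem_image.1 hx2
      rw [Finset.mem_product] at hij
      have hiB := (hmemB i).1 hij.1
      have hjQ := (hmemQ j).1 hij.2
      obtain ⟨ht0, ht1, _⟩ := hcross i j hiB hjQ
      exact cross_ne_vertex hu (hBQne i j hij.1 hij.2) ht0 ht1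
        (show u k = u i + tc i j • (u j - u i) by rw [← hcr, hcrdef])
    have hcard1 : (X.image u).card = X.card :=
      Finset.card_image_of_injOn (hu.injective.injOn)
    have hcard2 : ((B ×ˢ Q).image cr).card = B.card * Q.card := by
      rw [Finset.card_image_of_injOn, Finset.card_product]
      rintro ⟨i, j⟩ hij ⟨i', j'⟩ hij' heq
      rw [Finset.mem_coe, Finset.mem_product] at hij hij'
      have hiB := (hmemB i).1 hij.1
      have hjQ := (hmemQ j).1 hij.2
      have hiB' := (hmemB i').1 hij'.1
      have hjQ' := (hmemQ j').1 hij'.2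
      obtain ⟨ht0, ht1, _⟩ := hcross i j hiB hjQ
      obtain ⟨ht0', ht1', _⟩ := hcross i' j' hiB' hjQ'
      rw [hcrdef] at heq
      have := cross_inj hu (hBQne i j hij.1 hij.2) (hBQne i' j' hij'.1 hij'.2)
        (by intro h; rw [h] at hiB; linarith)
        (by intro h; rw [h] at hiB'; linarith) ht0 ht1 ht0' ht1' heq
      exact Prod.ext this.1 this.2
    calc X.card + B.card * Q.card
        = (X.image u ∪ (B ×ˢ Q).image cr).card := by
          rw [Finset.card_union_of_disjoint hdisj2, hcard1, hcard2]
      _ ≤ (Finset.univ.image vW).card := Finset.card_le_card hsub2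
      _ ≤ Finset.univ.card := Finset.card_image_le
      _ = n + 1 := by rw [Finset.card_univ, hcard]
  -- apply for S
  have hcountS : (B ∪ C).card + B.card * Q.card ≤ n + 1 := by
    apply hcount S vS (B ∪ C) hSv
    intro x hx
    rw [Finset.coe_union, Set.mem_union] at hx
    have hSsub : S ⊆ convexHull ℝ (Set.range u) := by
      rw [hSeq']; exact inter_subset_left
    rcases hx with hx | hx
    · rw [Finset.mem_coe, Finset.mem_image] at hx
      obtain ⟨k, hk, rfl⟩ := hx
      rcases Finset.mem_union.1 hk with hkB | hkC
      · exact extreme_vertex hu hSsub k (by rw [hSeq']; exact ⟨huU k, ((hmemB k).1 hkB).le⟩)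
      · exact extreme_vertex hu hSsub k (by rw [hSeq']; exact ⟨huU k, le_of_eq ((hmemC k).1 hkC)⟩)
    · rw [Finset.mem_coe, Finset.mem_image] at hx
      obtain ⟨⟨i, j⟩, hij, rfl⟩ := hx
      rw [Finset.mem_product] at hij
      have hiB := (hmemB i).1 hij.1
      have hjQ := (hmemQ j).1 hij.2
      obtain ⟨ht0, ht1, hfc⟩ := hcross i j hiB hjQ
      rw [hSeq']
      exact extreme_cross hu f c hiB hjQ ht0 ht1 (by rw [hcrdef]) hfc
  have hcountT : (Q ∪ C).card + B.card * Q.card ≤ n + 1 := by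
    apply hcount T vT (Q ∪ C) hTv
    intro x hx
    rw [Finset.coe_union, Set.mem_union] at hx
    have hTsub : T ⊆ convexHull ℝ (Set.range u) := by
      rw [hTeq']; exact inter_subset_left
    rcases hx with hx | hx
    · rw [Finset.mem_coe, Finset.mem_image] at hx
      obtain ⟨k, hk, rfl⟩ := hx
      rcases Finset.mem_union.1 hk with hkQ | hkC
      · exact extreme_vertex hu hTsub k (by rw [hTeq']; exact ⟨huU k, ((hmemQ k).1 hkQ).le⟩)
      · exact extreme_vertex hu hTsub k
          (by rw [hTeq']; exact ⟨huU k, ge_of_eq ((hmemC k).1 hkC)⟩)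
    · rw [Finset.mem_coe, Finset.mem_image] at hx
      obtain ⟨⟨i, j⟩, hij, rfl⟩ := hx
      rw [Finset.mem_product] at hij
      have hiB := (hmemB i).1 hij.1
      have hjQ := (hmemQ j).1 hij.2
      obtain ⟨ht0, ht1, hfc⟩ := hcross i j hiB hjQ
      rw [hTeqneg]
      have hm' : cr (i, j) = u j + (1 - tc i j) • (u i - u j) := by
        rw [hcrdef]
        match_scalars <;> ring
      have h1t0 : 0 < 1 - tc i j := by linarith
      have h1t1 : 1 - tc i j < 1 := by linarith
      exact extreme_cross hu (-f) (-c) (by simpa using hjQ) (by simpa using hiB)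
        h1t0 h1t1 hm' (by simpa using hfc)
  -- cardinal arithmetic
  have hcBC : (B ∪ C).card = B.card + C.card := Finset.card_union_of_disjoint hdBC
  have hcQC : (Q ∪ C).card = Q.card + C.card := by
    apply Finset.card_union_of_disjoint
    rw [Finset.disjoint_left]
    intro i hiQ hiC
    rw [hmemQ] at hiQ; rw [hmemC] at hiC; linarith
  have hB1 : B.card = 1 := by
    have h1 : B.card * Q.card ≤ Q.card := by omega
    have h2 : B.card * Q.card ≤ 1 * Q.card := by omega
    have := Nat.le_of_mul_le_mul_right h2 (Nat.pos_of_ne_zero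
      (fun h => absurd (Finset.card_eq_zero.1 h) (Finset.nonempty_iff_ne_empty.1 hQne)))
    have hBpos : 0 < B.card := Finset.card_pos.2 hBne
    omega
  have hQ1 : Q.card = 1 := by
    have h2 : B.card * Q.card ≤ 1 * B.card := by omega
    have h2' : Q.card * B.card ≤ 1 * B.card := by rw [Nat.mul_comm]; omega
    have := Nat.le_of_mul_le_mul_right h2' (Nat.pos_of_ne_zero
      (fun h => absurd (Finset.card_eq_zero.1 h) (Finset.nonempty_iff_ne_empty.1 hBne)))
    have hQpos : 0 < Q.card := Finset.card_pos.2 hQne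
    omega
  have hCcard : C.card = n - 1 := by omega
  obtain ⟨p, hBp⟩ := Finset.card_eq_one.1 hB1
  obtain ⟨q, hQq⟩ := Finset.card_eq_one.1 hQ1
  have hp : f (u p) < c := (hmemB p).1 (by rw [hBp]; exact Finset.mem_singleton_self p)
  have hq : c < f (u q) := (hmemQ q).1 (by rw [hQq]; exact Finset.mem_singleton_self q)
  have hC : ∀ i, i ≠ p → i ≠ q → f (u i) = c := by
    intro i hip hiq
    rcases lt_trichotomy (f (u i)) c with h | h | h
    · exact absurd (by rw [hBp] at hmemB; exact Finset.mem_singleton.1 ((hmemB i).2 h)) hip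
    · exact h
    · exact absurd (by rw [hQq] at hmemQ; exact Finset.mem_singleton.1 ((hmemQ i).2 h)) hiq
  -- conclusion
  obtain ⟨v, hv, hSveq, iS, hfaceS⟩ := main_facet hu f c p q hp hq hC hSeq' hfinS
  have hCneg : ∀ i, i ≠ q → i ≠ p → (-f) (u i) = -c := by
    intro i h1 h2; simp [hC i h2 h1]
  obtain ⟨w, hw, hTweq, iT, hfaceT⟩ := main_facet hu (-f) (-c) q p
    (by simpa using hq) (by simpa using hp) hCneg hTeqneg hfinT
  have hsetneg : {x : Euc N | (-f) x = -c} = {x | f x = c} := by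
    ext x; simp [neg_eq_iff_eq_neg]
  refine ⟨⟨v, hv, hSveq, iS, ?_⟩, ⟨w, hw, hTweq, iT, ?_⟩, u, hu, hUu, C, hCcard, ?_⟩
  · rw [hST, hfaceS]
  · rw [hST, ← hfaceT, hsetneg]
  · apply convexHull_min
    · rintro _ ⟨k, hk, rfl⟩
      rw [Finset.mem_coe] at hk
      have hkc := (hmemC k).1 hk
      have hkST : u k ∈ S ∩ T := by
        rw [hST]; exact ⟨huU k, hkc⟩
      exact subset_affineSpan ℝ _ hkST
    · exact (affineSpan ℝ (S ∩ T)).convex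
end
end
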